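/- arXiv:2311.00764 — 3 statements merged into one kernel-verified Lean document; each statement's English description precedes it below -/
import Mathlib

section
/- Let E be a Banach space, 0 < α ≤ 1 < β, and A : {(s,t) : 0 ≤ s ≤ t ≤ T} → E with A_{t,t} = 0, ‖A‖_α := sup_{s<t} ‖A_{s,t}‖/|t-s|^α < ∞ and ‖δA‖_β := sup_{s<u<t} ‖A_{s,t} - A_{s,u} - A_{u,t}‖/|t-s|^β < ∞. Then for every 0 ≤ s ≤ t ≤ T the Riemann-type sums Σ_{[u,v]∈𝒫} A_{u,v} over partitions 𝒫 of [s,t] converge as the mesh tends to zero to a limit (ℐA)_{s,t}, the map t ↦ (ℐA)_{0,t} is α-Hölder continuous, and ‖(ℐA)_{s,t} - A_{s,t}‖ ≤ c·‖δA‖_β·|t-s|^β with c depending only on β. -/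
open Finset Filter

section Sewing
variable {E : Type*} [NormedAddCommGroup E]
variable {β T Kb : ℝ} {A : ℝ → ℝ → E}

lemma sew_chainMono {α : Type*} [Preorder α] {g : ℕ → α} {n : ℕ}
    (h : ∀ i < n, g i ≤ g (i+1)) : ∀ i j, i ≤ j → j ≤ n → g i ≤ g j := by
  intro i j hij hjn
  induction j with
  | zero => simp_all
  | succ k IH =>
    rcases Nat.lt_or_ge i (k+1) with hl | hg
    · exact le_trans (IH (Nat.lt_succ_iff.mp hl) (le_trans (Nat.le_succ k) hjn))
        (h k (lt_of_lt_of_le (Nat.lt_succ_self k) hjn))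
    · have : i = k+1 := le_antisymm hij hg
      simp [this]

/-- Local sewing estimate via point removal. -/
lemma sew_L1 (hβ : 1 < β) (hKb : 0 ≤ Kb)
    (h0 : ∀ t, A t t = 0)
    (hB : ∀ s u t, 0 ≤ s → s ≤ u → u ≤ t → t ≤ T → ‖A s t - A s u - A u t‖ ≤ Kb * (t-s)^β) :
    ∀ (n : ℕ) (π : ℕ → ℝ), 0 ≤ π 0 → π n ≤ T → (∀ i < n, π i ≤ π (i+1)) →
      ‖(∑ i ∈ Finset.range n, A (π i) (π (i+1))) - A (π 0) (π n)‖
        ≤ Kb * (π n - π 0)^β * ∑ r ∈ Finset.range (n-1), (2/(r+1:ℝ))^β := by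
  intro n
  induction n with
  | zero => intro π _ _ _; simp [h0]
  | succ k IH =>
    intro π h0π hπT hgap
    rcases Nat.eq_zero_or_pos k with rfl | hk
    · have hΔ : (0:ℝ) ≤ π 1 - π 0 := sub_nonneg.mpr (hgap 0 (by norm_num))
      simp only [Finset.sum_range_one, Nat.zero_add, zero_add, sub_self, norm_zero]
      positivity
    -- k ≥ 1 : at least 2 intervals
    have hmono := sew_chainMono hgap
    have hΔ : (0:ℝ) ≤ π (k+1) - π 0 := sub_nonneg.mpr (hmono 0 (k+1) (by omega) le_rfl)
    -- find q < k with π (q+2) - π q ≤ 2Δ/k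
    have hsum : ∑ i ∈ range k, (π (i+2) - π i) ≤ ∑ _i ∈ range k, (2*(π (k+1) - π 0)/k) := by
      have e1 : ∀ i, π (i+2) - π i = (π (i+1+1) - π (i+1)) + (π (i+1) - π i) := by
        intro i; ring
      have hsub1 : ∑ i ∈ range k, (π (i+1+1) - π (i+1)) ≤ π (k+1) - π 0 := by
        have : ∑ i ∈ range k, (π (i+1+1) - π (i+1)) = π (k+1) - π 1 := by
          exact Finset.sum_range_sub (fun i => π (i+1)) k
        rw [this]
        have := hmono 0 1 (by omega) (by omega)
        linarith
      have hsub2 : ∑ i ∈ range k, (π (i+1) - π i) ≤ π (k+1) - π 0 := by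
        have : ∑ i ∈ range k, (π (i+1) - π i) = π k - π 0 := Finset.sum_range_sub π k
        rw [this]
        have := hmono k (k+1) (by omega) le_rfl
        linarith
      have hrhs : ∑ _i ∈ range k, (2*(π (k+1) - π 0)/k) = 2*(π (k+1) - π 0) := by
        rw [Finset.sum_const, Finset.card_range, nsmul_eq_mul]
        field_simp
      calc ∑ i ∈ range k, (π (i+2) - π i)
          = ∑ i ∈ range k, (π (i+1+1) - π (i+1)) + ∑ i ∈ range k, (π (i+1) - π i) := by
            rw [← Finset.sum_add_distrib]; exact Finset.sum_congr rfl (fun i _ => e1 i)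
        _ ≤ 2*(π (k+1) - π 0) := by linarith
        _ = ∑ _i ∈ range k, (2*(π (k+1) - π 0)/k) := hrhs.symm
    obtain ⟨q, hqmem, hq⟩ := Finset.exists_le_of_sum_le ⟨0, Finset.mem_range.mpr hk⟩ hsum
    have hqk : q < k := Finset.mem_range.mp hqmem
    -- removed partition
    set π' : ℕ → ℝ := fun i => if i < q+1 then π i else π (i+1) with hπ'
    have hlo : ∀ i, i < q+1 → π' i = π i := by
      intro i hi; simp only [hπ', if_pos hi]
    have hhi : ∀ i, q+1 ≤ i → π' i = π (i+1) := by
      intro i hi; simp only [hπ', if_neg (Nat.not_lt.mpr hi)]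
    have hπ'0 : π' 0 = π 0 := hlo 0 (by omega)
    have hπ'k : π' k = π (k+1) := hhi k (by omega)
    have hgap' : ∀ i < k, π' i ≤ π' (i+1) := by
      intro i hi
      by_cases h1 : i+1 < q+1
      · rw [hlo i (by omega), hlo (i+1) h1]; exact hgap i (by omega)
      · by_cases h2 : i < q+1
        · have hiq : i = q := by omega
          rw [hlo i h2, hhi (i+1) (by omega), hiq]
          exact le_trans (hgap q (by omega)) (hgap (q+1) (by omega))
        · rw [hhi i (by omega), hhi (i+1) (by omega)]
          exact hgap (i+1) (by omega)
    have hIH := IH π' (by rw [hπ'0]; exact h0π) (by rw [hπ'k]; exact hπT) hgap'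
    rw [hπ'0, hπ'k] at hIH
    -- sum identity
    have hsumid : ∑ i ∈ range (k+1), A (π i) (π (i+1))
        = (∑ i ∈ range k, A (π' i) (π' (i+1)))
          + (A (π q) (π (q+1)) + A (π (q+1)) (π (q+2)) - A (π q) (π (q+2))) := by
      have e1 : ∑ i ∈ range (k+1), A (π i) (π (i+1))
          = (∑ i ∈ range q, A (π i) (π (i+1))) + A (π q) (π (q+1)) + A (π (q+1)) (π (q+2))
            + ∑ i ∈ Ico (q+2) (k+1), A (π i) (π (i+1)) := by
        rw [← Finset.sum_range_add_sum_Ico _ (by omega : q+2 ≤ k+1),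
          Finset.sum_range_succ, Finset.sum_range_succ]
      have e2 : ∑ i ∈ range k, A (π' i) (π' (i+1))
          = (∑ i ∈ range q, A (π i) (π (i+1))) + A (π q) (π (q+2))
            + ∑ i ∈ Ico (q+2) (k+1), A (π i) (π (i+1)) := by
        rw [← Finset.sum_range_add_sum_Ico _ (by omega : q+1 ≤ k), Finset.sum_range_succ]
        congr 1
        · congr 1
          · apply Finset.sum_congr rfl
            intro i hi
            have hi' := Finset.mem_range.mp hi
            rw [hlo i (by omega), hlo (i+1) (by omega)]
          · rw [hlo q (by omega), hhi (q+1) (by omega)]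
        · rw [Finset.sum_Ico_eq_sum_range, Finset.sum_Ico_eq_sum_range]
          apply Finset.sum_congr (by congr 1; omega)
          intro i hi
          rw [hhi (q+1+i) (by omega), hhi (q+1+i+1) (by omega)]
          congr 2 <;> omega
      rw [e1, e2]; abel
    -- removal cost
    have hq0 : 0 ≤ π q := le_trans h0π (hmono 0 q (by omega) (by omega))
    have hcost : ‖A (π q) (π (q+2)) - A (π q) (π (q+1)) - A (π (q+1)) (π (q+2))‖
        ≤ Kb * (π (q+2) - π q)^β :=
      hB _ _ _ hq0 (hgap q (by omega)) (hgap (q+1) (by omega))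
        (le_trans (hmono (q+2) (k+1) (by omega) le_rfl) hπT)
    have hgapq : (0:ℝ) ≤ π (q+2) - π q := by
      have := hmono q (q+2) (by omega) (by omega); linarith
    have hcost2 : Kb * (π (q+2) - π q)^β ≤ Kb * ((π (k+1) - π 0)^β * (2/(k:ℝ))^β) := by
      apply mul_le_mul_of_nonneg_left _ hKb
      rw [← Real.mul_rpow hΔ (by positivity)]
      apply Real.rpow_le_rpow hgapq _ (by linarith)
      calc π (q+2) - π q ≤ 2*(π (k+1) - π 0)/k := hq
        _ = (π (k+1) - π 0) * (2/(k:ℝ)) := by ring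
    -- assemble
    have key : ‖(∑ i ∈ range (k+1), A (π i) (π (i+1))) - A (π 0) (π (k+1))‖
        ≤ ‖(∑ i ∈ range k, A (π' i) (π' (i+1))) - A (π 0) (π (k+1))‖
          + ‖A (π q) (π (q+2)) - A (π q) (π (q+1)) - A (π (q+1)) (π (q+2))‖ := by
      rw [hsumid]
      have : (∑ i ∈ range k, A (π' i) (π' (i+1)))
          + (A (π q) (π (q+1)) + A (π (q+1)) (π (q+2)) - A (π q) (π (q+2)))
          - A (π 0) (π (k+1))
        = ((∑ i ∈ range k, A (π' i) (π' (i+1))) - A (π 0) (π (k+1)))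
          - (A (π q) (π (q+2)) - A (π q) (π (q+1)) - A (π (q+1)) (π (q+2))) := by abel
      rw [this]
      exact norm_sub_le _ _
    have hFk : ∑ r ∈ range (k-1), (2/(r+1:ℝ))^β + (2/(k:ℝ))^β
        = ∑ r ∈ range ((k+1)-1), (2/(r+1:ℝ))^β := by
      have hk1 : (k+1)-1 = (k-1)+1 := by omega
      rw [hk1, Finset.sum_range_succ]
      congr 2
      have : ((k:ℕ) - 1 + 1 : ℕ) = k := by omega
      rw [show (((k-1:ℕ):ℝ)+1) = (((k-1)+1:ℕ):ℝ) by push_cast; ring, this]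
    calc ‖(∑ i ∈ range (k+1), A (π i) (π (i+1))) - A (π 0) (π (k+1))‖
        ≤ ‖(∑ i ∈ range k, A (π' i) (π' (i+1))) - A (π 0) (π (k+1))‖
          + ‖A (π q) (π (q+2)) - A (π q) (π (q+1)) - A (π (q+1)) (π (q+2))‖ := key
      _ ≤ Kb * (π (k+1) - π 0)^β * ∑ r ∈ range (k-1), (2/(r+1:ℝ))^β
          + Kb * ((π (k+1) - π 0)^β * (2/(k:ℝ))^β) := add_le_add hIH (le_trans hcost hcost2)
      _ = Kb * (π (k+1) - π 0)^β * (∑ r ∈ range (k-1), (2/(r+1:ℝ))^β + (2/(k:ℝ))^β) := by ring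
      _ = Kb * (π (k+1) - π 0)^β * ∑ r ∈ range ((k+1)-1), (2/(r+1:ℝ))^β := by rw [hFk]
-- chunk B: grouping lemma
lemma sew_blocks {M : Type*} [AddCommMonoid M] (f : ℕ → M) :
    ∀ (n : ℕ) (k : ℕ → ℕ), (∀ i < n, k i ≤ k (i+1)) →
      ∑ i ∈ Finset.range n, ∑ j ∈ Finset.Ico (k i) (k (i+1)), f j
        = ∑ j ∈ Finset.Ico (k 0) (k n), f j := by
  intro n
  induction n with
  | zero => simp
  | succ m IH =>
    intro k hk
    rw [Finset.sum_range_succ, IH k (fun i hi => hk i (by omega)),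
      Finset.sum_Ico_consecutive]
    · exact sew_chainMono hk 0 m (by omega) (by omega)
    · exact hk m (by omega)

/-- Refinement estimate: comparing a partition `π` to a refinement `ρ`. -/
lemma sew_R (hβ : 1 < β) (hKb : 0 ≤ Kb)
    (h0 : ∀ t, A t t = 0)
    (hB : ∀ s u t, 0 ≤ s → s ≤ u → u ≤ t → t ≤ T → ‖A s t - A s u - A u t‖ ≤ Kb * (t-s)^β)
    {C0 : ℝ} (hC0 : ∀ N : ℕ, ∑ r ∈ Finset.range N, (2/(r+1:ℝ))^β ≤ C0)
    (n : ℕ) (π : ℕ → ℝ) (m : ℕ) (ρ : ℕ → ℝ) (k : ℕ → ℕ)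
    (hρ0 : 0 ≤ ρ 0) (hρT : ρ m ≤ T) (hρgap : ∀ j < m, ρ j ≤ ρ (j+1))
    (hkmono : ∀ i < n, k i ≤ k (i+1)) (hk0 : k 0 = 0) (hkn : k n = m)
    (hπρ : ∀ i ≤ n, π i = ρ (k i)) :
    ‖(∑ j ∈ Finset.range m, A (ρ j) (ρ (j+1))) - ∑ i ∈ Finset.range n, A (π i) (π (i+1))‖
      ≤ C0 * Kb * ∑ i ∈ Finset.range n, (π (i+1) - π i)^β := by
  have hρmono := sew_chainMono hρgap
  have hkchain := sew_chainMono hkmono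
  have hkm : ∀ i, i ≤ n → k i ≤ m := by
    intro i hi; rw [← hkn]; exact hkchain i n hi le_rfl
  have hsplit : ∑ j ∈ Finset.range m, A (ρ j) (ρ (j+1))
      = ∑ i ∈ Finset.range n, ∑ j ∈ Finset.Ico (k i) (k (i+1)), A (ρ j) (ρ (j+1)) := by
    rw [sew_blocks _ n k hkmono, hk0, hkn, ← Finset.range_eq_Ico]
  rw [hsplit, ← Finset.sum_sub_distrib]
  refine le_trans (norm_sum_le _ _) ?_
  rw [Finset.mul_sum]
  apply Finset.sum_le_sum
  intro i hi
  have hin : i < n := Finset.mem_range.mp hi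
  -- apply L1 to the block
  have hend : k i + (k (i+1) - k i) = k (i+1) := Nat.add_sub_cancel' (hkmono i hin)
  have hki1m : k (i+1) ≤ m := hkm (i+1) (by omega)
  have harg1 : 0 ≤ (fun t => ρ (k i + t)) 0 := by
    show 0 ≤ ρ (k i + 0)
    exact le_trans hρ0 (hρmono 0 (k i + 0) (by omega) (by
      simpa using hkm i (by omega)))
  have harg2 : (fun t => ρ (k i + t)) (k (i+1) - k i) ≤ T := by
    show ρ (k i + (k (i+1) - k i)) ≤ T
    rw [hend]
    exact le_trans (hρmono (k (i+1)) m hki1m le_rfl) hρT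
  have harg3 : ∀ j < k (i+1) - k i,
      (fun t => ρ (k i + t)) j ≤ (fun t => ρ (k i + t)) (j+1) := by
    intro j hj
    show ρ (k i + j) ≤ ρ (k i + (j+1))
    have h2 : k i + (j+1) = (k i + j) + 1 := by omega
    rw [h2]
    exact hρgap (k i + j) (by omega)
  have hL := sew_L1 hβ hKb h0 hB (k (i+1) - k i) (fun t => ρ (k i + t)) harg1 harg2 harg3
  have hblock : ∑ j ∈ Finset.Ico (k i) (k (i+1)), A (ρ j) (ρ (j+1))
      = ∑ t ∈ Finset.range (k (i+1) - k i), A (ρ (k i + t)) (ρ (k i + t + 1)) := by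
    rw [Finset.sum_Ico_eq_sum_range]
  rw [hblock, hπρ i (by omega), hπρ (i+1) (by omega)]
  have hL' : ‖(∑ t ∈ Finset.range (k (i+1) - k i), A (ρ (k i + t)) (ρ (k i + t + 1)))
      - A (ρ (k i)) (ρ (k (i+1)))‖
      ≤ Kb * (ρ (k (i+1)) - ρ (k i))^β
          * ∑ r ∈ Finset.range ((k (i+1) - k i) - 1), (2/(r+1:ℝ))^β := by
    have := hL
    simp only [Nat.add_zero, hend] at this
    exact this
  refine le_trans hL' ?_
  have h1 : Kb * (ρ (k (i+1)) - ρ (k i))^β ≥ 0 := by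
    apply mul_nonneg hKb
    apply Real.rpow_nonneg
    have := hρmono (k i) (k (i+1)) (hkmono i hin) hki1m
    linarith
  calc Kb * (ρ (k (i+1)) - ρ (k i))^β * ∑ r ∈ Finset.range ((k (i+1) - k i) - 1), (2/(r+1:ℝ))^β
      ≤ Kb * (ρ (k (i+1)) - ρ (k i))^β * C0 := by
        exact mul_le_mul_of_nonneg_left (hC0 _) h1
    _ = C0 * Kb * (ρ (k (i+1)) - ρ (k i))^β := by ring
lemma sew_C0 (hβ : 1 < β) : ∃ C0 : ℝ, 0 ≤ C0 ∧
    ∀ N : ℕ, ∑ r ∈ Finset.range N, (2/(r+1:ℝ))^β ≤ C0 := by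
  have hsum : Summable (fun r : ℕ => (2/(r+1:ℝ))^β) := by
    have h1 : Summable (fun n : ℕ => 1 / ((n:ℝ))^β) := Real.summable_one_div_nat_rpow.mpr hβ
    have h2 : Summable (fun n : ℕ => 1 / ((n+1:ℕ):ℝ)^β) := (summable_nat_add_iff 1).mpr h1
    have h3 : Summable (fun n : ℕ => (2:ℝ)^β * (1 / ((n:ℝ)+1)^β)) := by
      apply Summable.mul_left
      convert h2 using 2 with n
      case e'_5 => push_cast; ring
      case e'_3 => rfl
    apply h3.congr
    intro n
    rw [Real.div_rpow (by norm_num) (by positivity)]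
    ring
  have hnn : ∀ r : ℕ, (0:ℝ) ≤ 2/(r+1:ℝ) := fun r => div_nonneg (by norm_num) (by positivity)
  refine ⟨∑' r : ℕ, (2/(r+1:ℝ))^β, tsum_nonneg (fun r => Real.rpow_nonneg (hnn r) _), ?_⟩
  intro N
  exact Summable.sum_le_tsum _ (fun r _ => Real.rpow_nonneg (hnn r) _) hsum

lemma sew_mesh_rpow (γ x : ℝ) (hx : 0 ≤ x) (m : ℕ) :
    (x/2^m)^γ = x^γ * ((2:ℝ)^(-γ))^m := by
  rw [Real.div_rpow hx (by positivity), ← Real.rpow_natCast 2 m,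
    ← Real.rpow_natCast ((2:ℝ)^(-γ)) m, ← Real.rpow_mul (by norm_num),
    ← Real.rpow_mul (by norm_num), div_eq_mul_inv, ← Real.rpow_neg (by norm_num)]
  ring_nf

lemma sew_pow_mesh {β : ℝ} (x : ℝ) (hx : 0 ≤ x) (m : ℕ) :
    (2:ℝ)^m * (x/2^m)^β = x^β * ((2:ℝ)^((1:ℝ)-β))^m := by
  rw [sew_mesh_rpow β x hx m, ← Real.rpow_natCast 2 m,
    ← Real.rpow_natCast ((2:ℝ)^(-β)) m, ← Real.rpow_natCast ((2:ℝ)^((1:ℝ)-β)) m,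
    ← Real.rpow_mul (by norm_num), ← Real.rpow_mul (by norm_num)]
  have h2 : (2:ℝ)^(((1:ℝ)-β)*(m:ℝ)) = 2^((m:ℝ)) * 2^(-β*(m:ℝ)) := by
    rw [← Real.rpow_add (by norm_num : (0:ℝ) < 2)]; ring_nf
  rw [h2]; ring

lemma sew_r_lt_one {γ : ℝ} (hγ : 0 < γ) : (0:ℝ) ≤ (2:ℝ)^(-γ) ∧ (2:ℝ)^(-γ) < 1 :=
  ⟨Real.rpow_nonneg (by norm_num) _,
    Real.rpow_lt_one_of_one_lt_of_neg (by norm_num) (by linarith)⟩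
end Sewing

/-- dyadic partition of `[s,t]` at level `m`. -/
noncomputable def sewDy (m : ℕ) (s t : ℝ) (i : ℕ) : ℝ := s + i * ((t-s)/2^m)

lemma sewDy_zero (m : ℕ) (s t : ℝ) : sewDy m s t 0 = s := by simp [sewDy]

lemma sewDy_last (m : ℕ) (s t : ℝ) : sewDy m s t (2^m) = t := by
  have h2 : ((2:ℝ))^m ≠ 0 := by positivity
  simp only [sewDy]
  push_cast
  field_simp
  ring

lemma sewDy_gap (m : ℕ) (s t : ℝ) (i : ℕ) :
    sewDy m s t (i+1) - sewDy m s t i = (t-s)/2^m := by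
  simp only [sewDy]; push_cast; ring

lemma sewDy_gaps {s t : ℝ} (hst : s ≤ t) (m : ℕ) :
    ∀ i, sewDy m s t i ≤ sewDy m s t (i+1) := by
  intro i
  have := sewDy_gap m s t i
  have h2 : (0:ℝ) ≤ (t-s)/2^m := by
    apply div_nonneg (by linarith) (by positivity)
  linarith

lemma sewDy_mem {s t : ℝ} (hst : s ≤ t) (m : ℕ) :
    ∀ j ≤ 2^m, s ≤ sewDy m s t j ∧ sewDy m s t j ≤ t := by
  intro j hj
  have hmono := sew_chainMono (g := sewDy m s t) (n := 2^m)
    (fun i _ => sewDy_gaps hst m i)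
  constructor
  · have := hmono 0 j (Nat.zero_le _) hj
    rwa [sewDy_zero] at this
  · have := hmono j (2^m) hj le_rfl
    rwa [sewDy_last] at this

lemma sewDy_refine (m : ℕ) (s t : ℝ) (i : ℕ) :
    sewDy m s t i = sewDy (m+1) s t (2*i) := by
  simp only [sewDy, pow_succ]
  push_cast
  have h2 : ((2:ℝ))^m ≠ 0 := by positivity
  field_simp

section Sewing2
variable {E : Type*} [NormedAddCommGroup E]
variable {β T Kb : ℝ} {A : ℝ → ℝ → E}

/-- Cauchy property of dyadic Riemann sums. -/
lemma sew_cauchy (hβ : 1 < β) (hKb : 0 ≤ Kb)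
    (h0 : ∀ t, A t t = 0)
    (hB : ∀ s u t, 0 ≤ s → s ≤ u → u ≤ t → t ≤ T → ‖A s t - A s u - A u t‖ ≤ Kb * (t-s)^β)
    {C0 : ℝ} (hC0 : ∀ N : ℕ, ∑ r ∈ Finset.range N, (2/(r+1:ℝ))^β ≤ C0)
    (s t : ℝ) (hs : 0 ≤ s) (hst : s ≤ t) (htT : t ≤ T) :
    CauchySeq (fun m => ∑ i ∈ Finset.range (2^m), A (sewDy m s t i) (sewDy m s t (i+1))) := by
  apply cauchySeq_of_le_geometric ((2:ℝ)^((1:ℝ)-β)) (C0*Kb*(t-s)^β)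
    (Real.rpow_lt_one_of_one_lt_of_neg (by norm_num) (by linarith))
  intro m
  rw [dist_eq_norm, norm_sub_rev]
  have hR := sew_R hβ hKb h0 hB hC0 (2^m) (sewDy m s t) (2^(m+1)) (sewDy (m+1) s t)
    (fun i => 2*i)
    (by rw [sewDy_zero]; exact hs)
    (by rw [sewDy_last]; exact htT)
    (fun j _ => sewDy_gaps hst (m+1) j)
    (fun i _ => by show 2*i ≤ 2*(i+1); omega)
    (by show 2*0 = 0; omega)
    (by show 2*2^m = 2^(m+1); rw [pow_succ, Nat.mul_comm])
    (fun i _ => sewDy_refine m s t i)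
  refine le_trans hR ?_
  have hsum : ∑ i ∈ Finset.range (2^m), (sewDy m s t (i+1) - sewDy m s t i)^β
      = (t-s)^β * ((2:ℝ)^((1:ℝ)-β))^m := by
    rw [← sew_pow_mesh (t-s) (by linarith) m]
    rw [Finset.sum_congr rfl (fun i _ => by rw [sewDy_gap])]
    rw [Finset.sum_const, Finset.card_range, nsmul_eq_mul]
    push_cast
    ring
  rw [hsum]
  ring_nf
  exact le_refl _

/-- Mesh comparison: any fine partition's Riemann sum is close to the dyadic limit. -/
lemma sew_M (hβ : 1 < β) (hKb : 0 ≤ Kb)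
    (h0 : ∀ t, A t t = 0)
    (hB : ∀ s u t, 0 ≤ s → s ≤ u → u ≤ t → t ≤ T → ‖A s t - A s u - A u t‖ ≤ Kb * (t-s)^β)
    {C0 : ℝ} (hC0 : ∀ N : ℕ, ∑ r ∈ Finset.range N, (2/(r+1:ℝ))^β ≤ C0)
    (s t : ℝ) (hs : 0 ≤ s) (hst : s ≤ t) (htT : t ≤ T) (J : E)
    (hJ : Filter.Tendsto
      (fun m => ∑ i ∈ Finset.range (2^m), A (sewDy m s t i) (sewDy m s t (i+1)))
      Filter.atTop (nhds J))
    (δ : ℝ) (hδ : 0 ≤ δ) (n : ℕ) (π : ℕ → ℝ) (hπ0 : π 0 = s) (hπn : π n = t)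
    (hgap : ∀ i < n, π i ≤ π (i+1)) (hmesh : ∀ i < n, π (i+1) - π i ≤ δ) :
    ‖(∑ i ∈ Finset.range n, A (π i) (π (i+1))) - J‖ ≤ C0 * Kb * (δ^(β-1) * (t-s)) := by
  have hC0nn : 0 ≤ C0 := le_trans (by simp) (hC0 0)
  have hπmono := sew_chainMono hgap
  have hπmem : ∀ i ≤ n, s ≤ π i ∧ π i ≤ t := by
    intro i hi
    exact ⟨hπ0 ▸ hπmono 0 i (Nat.zero_le _) hi, hπn ▸ hπmono i n hi le_rfl⟩
  -- the per-level comparison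
  have hcomp : ∀ m : ℕ,
      ‖(∑ i ∈ Finset.range n, A (π i) (π (i+1)))
        - ∑ i ∈ Finset.range (2^m), A (sewDy m s t i) (sewDy m s t (i+1))‖
      ≤ C0 * Kb * (δ^(β-1) * (t-s)) + (C0*Kb*(t-s)^β) * ((2:ℝ)^((1:ℝ)-β))^m := by
    intro m
    classical
    set P : Finset ℝ :=
      ((Finset.range (n+1)).image π) ∪ ((Finset.range (2^m+1)).image (sewDy m s t)) with hP
    have hπP : ∀ i ≤ n, π i ∈ P := by
      intro i hi
      exact Finset.mem_union_left _ (Finset.mem_image.mpr ⟨i, Finset.mem_range.mpr (by omega), rfl⟩)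
    have hDyP : ∀ j ≤ 2^m, sewDy m s t j ∈ P := by
      intro j hj
      exact Finset.mem_union_right _
        (Finset.mem_image.mpr ⟨j, Finset.mem_range.mpr (by omega), rfl⟩)
    have hPbound : ∀ x ∈ P, s ≤ x ∧ x ≤ t := by
      intro x hx
      rcases Finset.mem_union.mp hx with h | h
      · obtain ⟨i, hi, rfl⟩ := Finset.mem_image.mp h
        exact hπmem i (by have := Finset.mem_range.mp hi; omega)
      · obtain ⟨j, hj, rfl⟩ := Finset.mem_image.mp h
        exact sewDy_mem hst m j (by have := Finset.mem_range.mp hj; omega)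
    have hsP : s ∈ P := hπ0 ▸ hπP 0 (Nat.zero_le _)
    have htP : t ∈ P := hπn ▸ hπP n le_rfl
    have hcpos : 0 < P.card := Finset.card_pos.mpr ⟨s, hsP⟩
    set c := P.card with hc
    let iso := P.orderIsoOfFin (rfl : P.card = c)
    set ρ : ℕ → ℝ := fun j => if h : j < c then ((iso ⟨j,h⟩ : {x // x ∈ P}) : ℝ) else t with hρ
    set idx : ℝ → ℕ := fun x => if h : x ∈ P then ((iso.symm ⟨x,h⟩ : Fin c) : ℕ) else 0 with hidx
    have hρval : ∀ j (h : j < c), ρ j = ((iso ⟨j,h⟩ : {x // x ∈ P}) : ℝ) := by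
      intro j h; simp only [hρ, dif_pos h]
    have hρmem : ∀ j (h : j < c), ρ j ∈ P := by
      intro j h; rw [hρval j h]; exact (iso ⟨j,h⟩).2
    have hρle : ∀ j1 j2, j1 ≤ j2 → j2 < c → ρ j1 ≤ ρ j2 := by
      intro j1 j2 h12 h2
      rw [hρval j1 (lt_of_le_of_lt h12 h2), hρval j2 h2]
      exact Subtype.coe_le_coe.mpr (iso.monotone (by exact h12))
    have hρlt : ∀ j1 j2, j1 < j2 → j2 < c → ρ j1 < ρ j2 := by
      intro j1 j2 h12 h2
      rw [hρval j1 (lt_trans h12 h2), hρval j2 h2]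
      exact Subtype.coe_lt_coe.mpr (iso.strictMono (by exact h12))
    have hidx_lt : ∀ x (h : x ∈ P), idx x < c := by
      intro x h; simp only [hidx, dif_pos h]; exact (iso.symm ⟨x,h⟩).isLt
    have hρidx : ∀ x (h : x ∈ P), ρ (idx x) = x := by
      intro x h
      rw [hρval (idx x) (hidx_lt x h)]
      simp only [hidx, dif_pos h]
      have : (⟨(iso.symm ⟨x,h⟩ : Fin c), (iso.symm ⟨x,h⟩).isLt⟩ : Fin c) = iso.symm ⟨x,h⟩ :=
        Fin.eta _ _
      rw [this, OrderIso.apply_symm_apply]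
    have hidx_mono : ∀ x y (hx : x ∈ P) (hy : y ∈ P), x ≤ y → idx x ≤ idx y := by
      intro x y hx hy hxy
      simp only [hidx, dif_pos hx, dif_pos hy]
      exact iso.symm.monotone (Subtype.mk_le_mk.mpr hxy)
    have hρ0 : ρ 0 = s := by
      refine le_antisymm ?_ ((hPbound _ (hρmem 0 hcpos)).1)
      have h2 := hρle 0 (idx s) (Nat.zero_le _) (hidx_lt s hsP)
      rwa [hρidx s hsP] at h2
    set M := c - 1 with hM
    have hMc : M < c := by omega
    have hρM : ρ M = t := by
      refine le_antisymm ((hPbound _ (hρmem M hMc)).2) ?_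
      have h2 := hρle (idx t) M (by have := hidx_lt t htP; omega) hMc
      rwa [hρidx t htP] at h2
    have hidx_s : idx s = 0 := by
      by_contra hne
      have h1 : 0 < idx s := Nat.pos_of_ne_zero hne
      have := hρlt 0 (idx s) h1 (hidx_lt s hsP)
      rw [hρidx s hsP, hρ0] at this
      exact lt_irrefl s this
    have hidx_t : idx t = M := by
      have hle : idx t ≤ M := by have := hidx_lt t htP; omega
      rcases eq_or_lt_of_le hle with h | h
      · exact h
      · exfalso
        have := hρlt (idx t) M h hMc
        rw [hρidx t htP, hρM] at this
        exact lt_irrefl t this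
    have hρgaps : ∀ j < M, ρ j ≤ ρ (j+1) := fun j hj => hρle j (j+1) (Nat.le_succ j) (by omega)
    have hρ0T : 0 ≤ ρ 0 := by rw [hρ0]; exact hs
    have hρMT : ρ M ≤ T := by rw [hρM]; exact htT
    -- compare π to ρ
    have hR1 := sew_R hβ hKb h0 hB hC0 n π M ρ (fun i => idx (π i))
      hρ0T hρMT hρgaps
      (fun i hi => hidx_mono _ _ (hπP i (by omega)) (hπP (i+1) (by omega)) (hgap i hi))
      (by show idx (π 0) = 0; rw [hπ0, hidx_s])
      (by show idx (π n) = M; rw [hπn, hidx_t])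
      (fun i hi => (hρidx _ (hπP i hi)).symm)
    -- compare dyadic to ρ
    have hR2 := sew_R hβ hKb h0 hB hC0 (2^m) (sewDy m s t) M ρ (fun j => idx (sewDy m s t j))
      hρ0T hρMT hρgaps
      (fun j hj => hidx_mono _ _ (hDyP j (by omega)) (hDyP (j+1) (by omega)) (sewDy_gaps hst m j))
      (by show idx (sewDy m s t 0) = 0; rw [sewDy_zero, hidx_s])
      (by show idx (sewDy m s t (2^m)) = M; rw [sewDy_last, hidx_t])
      (fun j hj => (hρidx _ (hDyP j hj)).symm)
    -- bound the two mesh sums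
    have hb1 : ∑ i ∈ Finset.range n, (π (i+1) - π i)^β ≤ δ^(β-1) * (t-s) := by
      have hterm : ∀ i ∈ Finset.range n, (π (i+1) - π i)^β ≤ δ^(β-1) * (π (i+1) - π i) := by
        intro i hi
        have hin := Finset.mem_range.mp hi
        have hd : 0 ≤ π (i+1) - π i := sub_nonneg.mpr (hgap i hin)
        rcases eq_or_lt_of_le hd with h | h
        · rw [← h, Real.zero_rpow (by positivity : β ≠ 0)]
          simp
        · have e2 : (β-1)+1 = β := by ring
          have e : (π (i+1) - π i)^β = (π (i+1) - π i)^(β-1) * (π (i+1) - π i) := by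
            conv_lhs => rw [← e2]
            rw [Real.rpow_add h, Real.rpow_one]
          rw [e]
          apply mul_le_mul_of_nonneg_right _ hd
          exact Real.rpow_le_rpow hd (hmesh i hin) (by linarith)
      calc ∑ i ∈ Finset.range n, (π (i+1) - π i)^β
          ≤ ∑ i ∈ Finset.range n, δ^(β-1) * (π (i+1) - π i) := Finset.sum_le_sum hterm
        _ = δ^(β-1) * (π n - π 0) := by rw [← Finset.mul_sum, Finset.sum_range_sub]
        _ = δ^(β-1) * (t-s) := by rw [hπ0, hπn]
    have hb2 : ∑ i ∈ Finset.range (2^m), (sewDy m s t (i+1) - sewDy m s t i)^β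
        = (t-s)^β * ((2:ℝ)^((1:ℝ)-β))^m := by
      rw [← sew_pow_mesh (t-s) (by linarith) m]
      rw [Finset.sum_congr rfl (fun i _ => by rw [sewDy_gap])]
      rw [Finset.sum_const, Finset.card_range, nsmul_eq_mul]
      push_cast
      ring
    calc ‖(∑ i ∈ Finset.range n, A (π i) (π (i+1)))
          - ∑ i ∈ Finset.range (2^m), A (sewDy m s t i) (sewDy m s t (i+1))‖
        ≤ ‖(∑ j ∈ Finset.range M, A (ρ j) (ρ (j+1)))
            - ∑ i ∈ Finset.range n, A (π i) (π (i+1))‖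
          + ‖(∑ j ∈ Finset.range M, A (ρ j) (ρ (j+1)))
            - ∑ i ∈ Finset.range (2^m), A (sewDy m s t i) (sewDy m s t (i+1))‖ := by
          rw [← norm_neg ((∑ j ∈ Finset.range M, A (ρ j) (ρ (j+1)))
            - ∑ i ∈ Finset.range n, A (π i) (π (i+1)))]
          refine le_trans (le_of_eq ?_) (norm_add_le _ _)
          congr 1
          abel
      _ ≤ C0 * Kb * (δ^(β-1) * (t-s)) + (C0*Kb*(t-s)^β) * ((2:ℝ)^((1:ℝ)-β))^m := by
          refine add_le_add (le_trans hR1 ?_) (le_trans hR2 ?_)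
          · exact mul_le_mul_of_nonneg_left hb1 (by positivity)
          · rw [hb2]; ring_nf; exact le_refl _
  -- pass to the limit in m
  have hlim1 : Filter.Tendsto
      (fun m => ‖(∑ i ∈ Finset.range n, A (π i) (π (i+1)))
        - ∑ i ∈ Finset.range (2^m), A (sewDy m s t i) (sewDy m s t (i+1))‖)
      Filter.atTop (nhds ‖(∑ i ∈ Finset.range n, A (π i) (π (i+1))) - J‖) :=
    ((Filter.Tendsto.const_sub _ hJ).norm)
  have hlim2 : Filter.Tendsto
      (fun m => C0 * Kb * (δ^(β-1) * (t-s)) + (C0*Kb*(t-s)^β) * ((2:ℝ)^((1:ℝ)-β))^m)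
      Filter.atTop (nhds (C0 * Kb * (δ^(β-1) * (t-s)))) := by
    have hr := sew_r_lt_one (γ := β - 1) (by linarith)
    have h1 : ((2:ℝ)^((1:ℝ)-β)) = (2:ℝ)^(-(β-1)) := by norm_num
    have hgeo : Filter.Tendsto (fun m : ℕ => ((2:ℝ)^((1:ℝ)-β))^m) Filter.atTop (nhds 0) := by
      rw [h1]
      exact tendsto_pow_atTop_nhds_zero_of_lt_one hr.1 hr.2
    have := (hgeo.const_mul (C0*Kb*(t-s)^β)).const_add (C0 * Kb * (δ^(β-1) * (t-s)))
    simpa using this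
  exact le_of_tendsto_of_tendsto hlim1 hlim2 (Filter.Eventually.of_forall hcomp)
end Sewing2
/-- The Sewing Lemma (Gubinelli): a germ `A` with `A_{t,t} = 0`, `‖A_{s,t}‖ ≤ Ka |t-s|^α`
and `‖δA_{s,u,t}‖ ≤ Kb |t-s|^β` (`0 < α ≤ 1 < β`) admits a sewing `I` : Riemann-type sums
converge, `t ↦ I_t` is `α`-Hölder, `I_0 = 0`, and `‖I_t - I_s - A_{s,t}‖ ≤ c Kb |t-s|^β`
with `c = c(β)`. -/
theorem stmt_7 (α β : ℝ) (hα : 0 < α) (hα1 : α ≤ 1) (hβ : 1 < β) :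
    ∃ c > (0:ℝ), ∀ (E : Type) [NormedAddCommGroup E] [NormedSpace ℝ E] [CompleteSpace E],
      ∀ (T : ℝ), 0 < T → ∀ (A : ℝ → ℝ → E) (Ka Kb : ℝ),
      (∀ t, A t t = 0) →
      (∀ s t, 0 ≤ s → s ≤ t → t ≤ T → ‖A s t‖ ≤ Ka * (t - s) ^ α) →
      (∀ s u t, 0 ≤ s → s ≤ u → u ≤ t → t ≤ T →
        ‖A s t - A s u - A u t‖ ≤ Kb * (t - s) ^ β) →
      ∃ I : ℝ → E, I 0 = 0 ∧
        (∀ s t, 0 ≤ s → s ≤ t → t ≤ T → ∀ ε > (0:ℝ), ∃ δ > (0:ℝ),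
          ∀ (n : ℕ) (π : ℕ → ℝ), π 0 = s → π n = t →
            (∀ i < n, π i ≤ π (i + 1)) → (∀ i < n, π (i + 1) - π i < δ) →
            ‖(∑ i ∈ Finset.range n, A (π i) (π (i + 1))) - (I t - I s)‖ < ε) ∧
        (∃ CH : ℝ, ∀ s t, 0 ≤ s → s ≤ t → t ≤ T → ‖I t - I s‖ ≤ CH * (t - s) ^ α) ∧
        (∀ s t, 0 ≤ s → s ≤ t → t ≤ T → ‖(I t - I s) - A s t‖ ≤ c * Kb * (t - s) ^ β) := by
  obtain ⟨C0, hC0nn, hC0⟩ := sew_C0 hβ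
  refine ⟨C0 + 1, by linarith, ?_⟩
  intro E _ _ _ T hT A Ka Kb h0 hA hB
  have hKb : 0 ≤ Kb := by
    have h1 := hB 0 0 T le_rfl le_rfl hT.le le_rfl
    rw [h0 0] at h1
    simp only [sub_zero, sub_self, norm_zero] at h1
    nlinarith [Real.rpow_pos_of_pos hT β]
  -- existence of the dyadic limits
  have hJex : ∀ s t : ℝ, ∃ J : E, (0 ≤ s → s ≤ t → t ≤ T →
      Tendsto (fun m => ∑ i ∈ Finset.range (2^m), A (sewDy m s t i) (sewDy m s t (i+1)))
        atTop (nhds J)) := by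
    intro s t
    by_cases hc : 0 ≤ s ∧ s ≤ t ∧ t ≤ T
    · obtain ⟨x, hx⟩ := cauchySeq_tendsto_of_complete
        (sew_cauchy hβ hKb h0 hB hC0 s t hc.1 hc.2.1 hc.2.2)
      exact ⟨x, fun _ _ _ => hx⟩
    · exact ⟨0, fun h1 h2 h3 => absurd ⟨h1, h2, h3⟩ hc⟩
  choose J hJ using hJex
  have hJdiag : ∀ s, 0 ≤ s → s ≤ T → J s s = 0 := by
    intro s hs hsT
    have h1 := hJ s s hs le_rfl hsT
    have hcc : ∀ m i, sewDy m s s i = s := by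
      intro m i; simp [sewDy]
    have h2 : (fun m => ∑ i ∈ Finset.range (2^m), A (sewDy m s s i) (sewDy m s s (i+1)))
        = fun _ => (0:E) := by
      funext m
      apply Finset.sum_eq_zero
      intro i _
      rw [hcc m i, hcc m (i+1), h0]
    rw [h2] at h1
    exact (tendsto_nhds_unique h1 tendsto_const_nhds)
  have hJA : ∀ s t, 0 ≤ s → s ≤ t → t ≤ T → ‖J s t - A s t‖ ≤ C0 * Kb * (t-s)^β := by
    intro s t hs hst htT
    have hlim := ((hJ s t hs hst htT).sub_const (A s t)).norm
    apply le_of_tendsto' hlim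
    intro m
    have hL := sew_L1 hβ hKb h0 hB (2^m) (sewDy m s t)
      (by rw [sewDy_zero]; exact hs) (by rw [sewDy_last]; exact htT)
      (fun i _ => sewDy_gaps hst m i)
    rw [sewDy_zero, sewDy_last] at hL
    refine le_trans hL ?_
    have hnn : 0 ≤ Kb * (t-s)^β :=
      mul_nonneg hKb (Real.rpow_nonneg (by linarith) β)
    calc Kb*(t-s)^β * ∑ r ∈ Finset.range (2^m - 1), (2/(r+1:ℝ))^β
        ≤ Kb*(t-s)^β * C0 := mul_le_mul_of_nonneg_left (hC0 _) hnn
      _ = C0*Kb*(t-s)^β := by ring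
  -- additivity at a point (with left endpoint 0)
  have hadd : ∀ u t, 0 ≤ u → u ≤ t → t ≤ T → J 0 u + J u t = J 0 t := by
    intro u t hu hut htT
    have h2pow : ∀ m : ℕ, (2:ℕ)^m ≤ 2^(m+1) := fun m => Nat.pow_le_pow_right (by norm_num) (by omega)
    have hlen : ∀ m : ℕ, (2:ℕ)^(m+1) - 2^m = 2^m := fun m => by rw [pow_succ]; omega
    have key : ∀ m : ℕ,
        ‖((∑ i ∈ Finset.range (2^m), A (sewDy m 0 u i) (sewDy m 0 u (i+1)))
          + (∑ i ∈ Finset.range (2^m), A (sewDy m u t i) (sewDy m u t (i+1)))) - J 0 t‖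
        ≤ C0*Kb*((t/2^m)^(β-1)*(t-0)) := by
      intro m
      set σ : ℕ → ℝ := fun i => if i ≤ 2^m then sewDy m 0 u i else sewDy m u t (i - 2^m) with hσ
      have hσlo : ∀ i, i ≤ 2^m → σ i = sewDy m 0 u i := by
        intro i hi; simp only [hσ, if_pos hi]
      have hσhi : ∀ i, 2^m ≤ i → σ i = sewDy m u t (i - 2^m) := by
        intro i hi
        rcases eq_or_lt_of_le hi with h | h
        · rw [← h, hσlo _ le_rfl, sewDy_last, Nat.sub_self, sewDy_zero]
        · simp only [hσ, if_neg (by omega : ¬ i ≤ 2^m)]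
      have hσ0 : σ 0 = 0 := by rw [hσlo 0 (Nat.zero_le _), sewDy_zero]
      have hσN : σ (2^(m+1)) = t := by
        rw [hσhi _ (h2pow m), hlen m, sewDy_last]
      have hgapσ : ∀ i < 2^(m+1), σ i ≤ σ (i+1) := by
        intro i hi
        rcases le_or_gt (i+1) (2^m) with h | h
        · rw [hσlo i (by omega), hσlo (i+1) h]; exact sewDy_gaps hu m i
        · have hi2 : 2^m ≤ i := by omega
          rw [hσhi i hi2, hσhi (i+1) (by omega)]
          have e : i+1-2^m = (i-2^m)+1 := by omega
          rw [e]
          exact sewDy_gaps hut m _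
      have hmeshσ : ∀ i < 2^(m+1), σ (i+1) - σ i ≤ t/2^m := by
        intro i hi
        have h2m : (0:ℝ) < 2^m := by positivity
        rcases le_or_gt (i+1) (2^m) with h | h
        · rw [hσlo i (by omega), hσlo (i+1) h, sewDy_gap]
          gcongr
          linarith
        · have hi2 : 2^m ≤ i := by omega
          rw [hσhi i hi2, hσhi (i+1) (by omega)]
          have e : i+1-2^m = (i-2^m)+1 := by omega
          rw [e, sewDy_gap]
          gcongr
          linarith
      have hMapp := sew_M hβ hKb h0 hB hC0 0 t le_rfl (by linarith) htT (J 0 t)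
        (hJ 0 t le_rfl (by linarith) htT) (t/2^m)
        (div_nonneg (by linarith) (by positivity)) (2^(m+1)) σ hσ0 hσN hgapσ hmeshσ
      have hsplit : ∑ i ∈ Finset.range (2^(m+1)), A (σ i) (σ (i+1))
          = (∑ i ∈ Finset.range (2^m), A (sewDy m 0 u i) (sewDy m 0 u (i+1)))
            + ∑ i ∈ Finset.range (2^m), A (sewDy m u t i) (sewDy m u t (i+1)) := by
        rw [← Finset.sum_range_add_sum_Ico _ (h2pow m)]
        congr 1
        · apply Finset.sum_congr rfl
          intro i hi
          have hi' := Finset.mem_range.mp hi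
          rw [hσlo i (by omega), hσlo (i+1) (by omega)]
        · rw [Finset.sum_Ico_eq_sum_range, hlen m]
          apply Finset.sum_congr rfl
          intro j _
          rw [hσhi (2^m + j) (by omega), hσhi (2^m + j + 1) (by omega)]
          have e1 : 2^m + j - 2^m = j := by omega
          have e2 : 2^m + j + 1 - 2^m = j+1 := by omega
          rw [e1, e2]
      rw [hsplit] at hMapp
      exact hMapp
    have hlim1 : Tendsto (fun m =>
        ‖((∑ i ∈ Finset.range (2^m), A (sewDy m 0 u i) (sewDy m 0 u (i+1)))
          + (∑ i ∈ Finset.range (2^m), A (sewDy m u t i) (sewDy m u t (i+1)))) - J 0 t‖)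
        atTop (nhds ‖(J 0 u + J u t) - J 0 t‖) :=
      (((hJ 0 u le_rfl hu (by linarith)).add (hJ u t hu hut htT)).sub_const _).norm
    have hlim2 : Tendsto (fun m : ℕ => C0*Kb*((t/2^m)^(β-1)*(t-0))) atTop (nhds 0) := by
      have hr := sew_r_lt_one (γ := β - 1) (by linarith)
      have hgeo := tendsto_pow_atTop_nhds_zero_of_lt_one hr.1 hr.2
      have heq : ∀ m : ℕ, C0*Kb*((t/2^m)^(β-1)*(t-0))
          = (C0*Kb*(t^(β-1))*t) * ((2:ℝ)^(-(β-1)))^m := by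
        intro m
        rw [sew_mesh_rpow (β-1) t (by linarith)]
        ring
      have := hgeo.const_mul (C0*Kb*(t^(β-1))*t)
      simp only [mul_zero] at this
      exact Tendsto.congr (fun m => (heq m).symm) this
    have hle := le_of_tendsto_of_tendsto hlim1 hlim2 (Eventually.of_forall key)
    have h2 : J 0 u + J u t - J 0 t = 0 := norm_le_zero_iff.mp hle
    exact sub_eq_zero.mp h2
  set I : ℝ → E := fun t => J 0 t with hI
  have hI0 : I 0 = 0 := hJdiag 0 le_rfl hT.le
  have hdiff : ∀ s t, 0 ≤ s → s ≤ t → t ≤ T → I t - I s = J s t := by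
    intro s t hs hst htT
    have h1 := hadd s t hs hst htT
    simp only [hI]
    rw [← h1]
    abel
  refine ⟨I, hI0, ?_, ?_, ?_⟩
  · -- convergence of Riemann sums
    intro s t hs hst htT ε hε
    set K := C0*Kb*T with hK
    have hKnn : 0 ≤ K := mul_nonneg (mul_nonneg hC0nn hKb) hT.le
    have hK1 : (0:ℝ) < K + 1 := by linarith
    refine ⟨(ε/(K+1))^((β-1)⁻¹),
      Real.rpow_pos_of_pos (div_pos hε hK1) _, ?_⟩
    intro n π hπ0 hπn hgap hmesh
    set δ := (ε/(K+1))^((β-1)⁻¹) with hδdef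
    have hδpos : 0 < δ := Real.rpow_pos_of_pos (div_pos hε hK1) _
    have hδpow : δ^(β-1) = ε/(K+1) :=
      Real.rpow_inv_rpow (le_of_lt (div_pos hε hK1)) (by linarith : β-1 ≠ 0)
    have hMapp := sew_M hβ hKb h0 hB hC0 s t hs hst htT (J s t) (hJ s t hs hst htT)
      δ hδpos.le n π hπ0 hπn hgap (fun i hi => (hmesh i hi).le)
    rw [hdiff s t hs hst htT]
    refine lt_of_le_of_lt hMapp ?_
    rw [hδpow]
    have h1 : C0*Kb*(t-s) ≤ K := by
      rw [hK]
      have : t - s ≤ T := by linarith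
      nlinarith [mul_nonneg hC0nn hKb]
    calc C0*Kb*(ε/(K+1)*(t-s)) = (C0*Kb*(t-s)) * (ε/(K+1)) := by ring
      _ ≤ K * (ε/(K+1)) := by
          apply mul_le_mul_of_nonneg_right h1 (le_of_lt (div_pos hε hK1))
      _ < ε := by
          rw [mul_div_assoc', div_lt_iff₀ hK1]
          nlinarith
  · -- Hölder continuity
    refine ⟨C0*Kb*T^(β-α) + Ka, ?_⟩
    intro s t hs hst htT
    rw [hdiff s t hs hst htT]
    have h2 := hJA s t hs hst htT
    have h3 := hA s t hs hst htT
    have h4 : (t-s)^β ≤ T^(β-α)*(t-s)^α := by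
      rcases eq_or_lt_of_le hst with h | h
      · rw [← h]
        simp only [sub_self, Real.zero_rpow (by positivity : β ≠ 0),
          Real.zero_rpow (by positivity : α ≠ 0), mul_zero, le_refl]
      · have hpos : 0 < t - s := by linarith
        have e2 : (β-α)+α = β := by ring
        have e : (t-s)^β = (t-s)^(β-α)*(t-s)^α := by
          conv_lhs => rw [← e2]
          rw [Real.rpow_add hpos]
        rw [e]
        apply mul_le_mul_of_nonneg_right _ (Real.rpow_nonneg hpos.le α)
        exact Real.rpow_le_rpow hpos.le (by linarith) (by linarith)
    have h1 : ‖J s t‖ ≤ ‖J s t - A s t‖ + ‖A s t‖ := by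
      calc ‖J s t‖ = ‖(J s t - A s t) + A s t‖ := by congr 1; abel
        _ ≤ ‖J s t - A s t‖ + ‖A s t‖ := norm_add_le _ _
    calc ‖J s t‖ ≤ ‖J s t - A s t‖ + ‖A s t‖ := h1
      _ ≤ C0*Kb*(t-s)^β + Ka*(t-s)^α := add_le_add h2 h3
      _ ≤ C0*Kb*(T^(β-α)*(t-s)^α) + Ka*(t-s)^α := by
          apply add_le_add_left
          exact mul_le_mul_of_nonneg_left h4 (mul_nonneg hC0nn hKb)
      _ = (C0*Kb*T^(β-α) + Ka)*(t-s)^α := by ring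
  · -- main sewing bound
    intro s t hs hst htT
    rw [hdiff s t hs hst htT]
    refine le_trans (hJA s t hs hst htT) ?_
    have hx : 0 ≤ Kb*(t-s)^β := mul_nonneg hKb (Real.rpow_nonneg (by linarith) β)
    nlinarith [hx, hC0nn]
end

section
/- Let E be a Banach space, 0 < α ≤ 1 < β, A ∈ C₂^{α,β}(E) and (Aⁿ)ₙ ⊂ C₂^{α,β}(E) with sup_n ‖δAⁿ‖_β ≤ R and ‖Aⁿ - A‖_α → 0. Then the sewings satisfy ‖ℐ(A - Aⁿ)‖_α → 0. -/
/-- Stability of sewing (Lemma A.2 of Galeati): if germs `Aⁿ → A` in `α`-Hölder norm with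
uniformly bounded `β`-norms of `δAⁿ`, then the sewings converge: `‖ℐ(A - Aⁿ)‖_α → 0`.
The sewings `I`, `Iₙ` are characterised by the sewing bound `‖I_{s,t} - A_{s,t}‖ ≤ c|t-s|^β`. -/
theorem stmt_8 (α β T : ℝ) (hα : 0 < α) (hα1 : α ≤ 1) (hβ : 1 < β) (hT : 0 < T)
    (E : Type*) [NormedAddCommGroup E] [NormedSpace ℝ E] [CompleteSpace E]
    (A : ℝ → ℝ → E) (An : ℕ → ℝ → ℝ → E) (I : ℝ → E) (In : ℕ → ℝ → E)
    (R c : ℝ) (hc : 0 < c)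
    (hδA : ∀ s u t, 0 ≤ s → s ≤ u → u ≤ t → t ≤ T →
      ‖A s t - A s u - A u t‖ ≤ R * (t - s) ^ β)
    (hδAn : ∀ n s u t, 0 ≤ s → s ≤ u → u ≤ t → t ≤ T →
      ‖An n s t - An n s u - An n u t‖ ≤ R * (t - s) ^ β)
    (hsewI : ∀ s t, 0 ≤ s → s ≤ t → t ≤ T →
      ‖(I t - I s) - A s t‖ ≤ c * (t - s) ^ β)
    (hsewIn : ∀ n s t, 0 ≤ s → s ≤ t → t ≤ T →
      ‖(In n t - In n s) - An n s t‖ ≤ c * (t - s) ^ β)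
    (hconv : ∀ ε > (0:ℝ), ∃ N, ∀ n ≥ N, ∀ s t, 0 ≤ s → s ≤ t → t ≤ T →
      ‖An n s t - A s t‖ ≤ ε * (t - s) ^ α) :
    ∀ ε > (0:ℝ), ∃ N, ∀ n ≥ N, ∀ s t, 0 ≤ s → s ≤ t → t ≤ T →
      ‖(I t - I s) - (In n t - In n s)‖ ≤ ε * (t - s) ^ α := by
  intro ε hε
  have hβ1 : (0:ℝ) < β - 1 := by linarith
  -- choose number of subdivisions k
  have htend : Filter.Tendsto (fun m : ℕ => 2*c*T^(β-α)*(((m:ℝ)^(β-1))⁻¹))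
      Filter.atTop (nhds 0) := by
    have h1 : Filter.Tendsto (fun m : ℕ => ((m:ℝ)^(β-1))⁻¹) Filter.atTop (nhds 0) :=
      ((tendsto_rpow_atTop hβ1).comp tendsto_natCast_atTop_atTop).inv_tendsto_atTop
    simpa using h1.const_mul (2*c*T^(β-α))
  obtain ⟨k, hkε, hk1⟩ := ((htend.eventually_lt_const (half_pos hε)).and
    (Filter.eventually_ge_atTop 1)).exists
  have hkpos : (0:ℝ) < (k:ℝ) := by exact_mod_cast hk1
  set K : ℝ := (k:ℝ)^((1:ℝ)-α) with hK
  have hKpos : 0 < K := Real.rpow_pos_of_pos hkpos _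
  obtain ⟨N, hN⟩ := hconv (ε/(2*K)) (div_pos hε (by linarith))
  refine ⟨N, fun n hn s t hs hst htT => ?_⟩
  have hts : 0 ≤ t - s := by linarith
  set h : ℝ := (t-s)/k with hh
  have hh0 : 0 ≤ h := div_nonneg hts hkpos.le
  set g : ℕ → ℝ := fun i => s + i*h with hg
  have hgk : g k = t := by simp only [hg, hh]; rw [mul_comm, div_mul_cancel₀ _ hkpos.ne']; ring
  have hg0 : g 0 = s := by simp [hg]
  have hgmono : ∀ i j : ℕ, i ≤ j → g i ≤ g j := by
    intro i j hij
    have : (i:ℝ) ≤ j := by exact_mod_cast hij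
    simp only [hg]
    nlinarith
  have hgdiff : ∀ i : ℕ, g (i+1) - g i = h := by
    intro i; simp only [hg]; push_cast; ring
  -- per-piece bound
  have piece : ∀ i ∈ Finset.range k,
      ‖(I (g (i+1)) - In n (g (i+1))) - (I (g i) - In n (g i))‖
        ≤ 2*c*h^β + (ε/(2*K))*h^α := by
    intro i hi
    rw [Finset.mem_range] at hi
    have h0i : 0 ≤ g i := le_trans hs (by simpa [hg0] using hgmono 0 i (Nat.zero_le _))
    have hii : g i ≤ g (i+1) := hgmono i (i+1) (Nat.le_succ _)
    have hiT : g (i+1) ≤ T := le_trans (by simpa [hgk] using hgmono (i+1) k hi) htT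
    have e1 := hsewI (g i) (g (i+1)) h0i hii hiT
    have e2 := hsewIn n (g i) (g (i+1)) h0i hii hiT
    have e3 := hN n hn (g i) (g (i+1)) h0i hii hiT
    rw [hgdiff i] at e1 e2 e3
    calc ‖(I (g (i+1)) - In n (g (i+1))) - (I (g i) - In n (g i))‖
        = ‖((I (g (i+1)) - I (g i)) - A (g i) (g (i+1)))
            - ((In n (g (i+1)) - In n (g i)) - An n (g i) (g (i+1)))
            - (An n (g i) (g (i+1)) - A (g i) (g (i+1)))‖ := by
          congr 1; abel
      _ ≤ ‖((I (g (i+1)) - I (g i)) - A (g i) (g (i+1)))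
            - ((In n (g (i+1)) - In n (g i)) - An n (g i) (g (i+1)))‖
          + ‖An n (g i) (g (i+1)) - A (g i) (g (i+1))‖ := norm_sub_le _ _
      _ ≤ (‖(I (g (i+1)) - I (g i)) - A (g i) (g (i+1))‖
          + ‖(In n (g (i+1)) - In n (g i)) - An n (g i) (g (i+1))‖)
          + ‖An n (g i) (g (i+1)) - A (g i) (g (i+1))‖ := by
            gcongr; exact norm_sub_le _ _
      _ ≤ (c*h^β + c*h^β) + (ε/(2*K))*h^α := by gcongr
      _ = 2*c*h^β + (ε/(2*K))*h^α := by ring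
  -- telescoping
  have tel : (I t - In n t) - (I s - In n s)
      = ∑ i ∈ Finset.range k, ((I (g (i+1)) - In n (g (i+1))) - (I (g i) - In n (g i))) := by
    rw [Finset.sum_range_sub (fun i => I (g i) - In n (g i)) k, hg0, hgk]
  have hsum : ‖(I t - I s) - (In n t - In n s)‖
      ≤ (k:ℝ) * (2*c*h^β + (ε/(2*K))*h^α) := by
    have : ‖(I t - I s) - (In n t - In n s)‖
        = ‖(I t - In n t) - (I s - In n s)‖ := by congr 1; abel
    rw [this, tel]
    calc ‖∑ i ∈ Finset.range k, ((I (g (i+1)) - In n (g (i+1))) - (I (g i) - In n (g i)))‖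
        ≤ ∑ i ∈ Finset.range k, ‖(I (g (i+1)) - In n (g (i+1))) - (I (g i) - In n (g i))‖ :=
          norm_sum_le _ _
      _ ≤ ∑ i ∈ Finset.range k, (2*c*h^β + (ε/(2*K))*h^α) := Finset.sum_le_sum piece
      _ = (k:ℝ) * (2*c*h^β + (ε/(2*K))*h^α) := by
          rw [Finset.sum_const, Finset.card_range]; push_cast; ring
  refine hsum.trans ?_
  -- arithmetic
  have hhβ : h^β = (t-s)^β / (k:ℝ)^β := Real.div_rpow hts (le_of_lt hkpos) β
  have hhα : h^α = (t-s)^α / (k:ℝ)^α := Real.div_rpow hts (le_of_lt hkpos) α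
  have hkα : (0:ℝ) < (k:ℝ)^α := Real.rpow_pos_of_pos hkpos _
  have hkβ : (0:ℝ) < (k:ℝ)^β := Real.rpow_pos_of_pos hkpos _
  have hkβ1 : (0:ℝ) < (k:ℝ)^(β-1) := Real.rpow_pos_of_pos hkpos _
  have e1 : K * (k:ℝ)^α = k := by
    rw [hK, ← Real.rpow_add hkpos]; norm_num
  have e2 : (k:ℝ)^(β-1) * (k:ℝ) = (k:ℝ)^β := by
    nth_rewrite 2 [show (k:ℝ) = (k:ℝ)^(1:ℝ) by rw [Real.rpow_one]]
    rw [← Real.rpow_add hkpos]; norm_num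
  have term2 : (k:ℝ) * ((ε/(2*K))*h^α) = (ε/2)*(t-s)^α := by
    rw [hhα]
    field_simp
    linear_combination (-(t-s)^α) * e1
  have term1 : (k:ℝ) * (2*c*h^β) = 2*c*(((k:ℝ)^(β-1))⁻¹) * (t-s)^β := by
    rw [hhβ]
    field_simp
    linear_combination ((t-s)^β) * e2
  have hb : (t-s)^β ≤ T^(β-α)*(t-s)^α := by
    have h1 : (t-s)^((β-α)+α) = (t-s)^(β-α) * (t-s)^α :=
      Real.rpow_add_of_nonneg hts (by linarith) hα.le
    rw [show (β-α)+α = β from by ring] at h1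
    rw [h1]
    exact mul_le_mul_of_nonneg_right
      (Real.rpow_le_rpow hts (by linarith) (by linarith)) (Real.rpow_nonneg hts _)
  have hP : (0:ℝ) < ((k:ℝ)^(β-1))⁻¹ := by positivity
  have hfin : 2*c*(((k:ℝ)^(β-1))⁻¹) * (t-s)^β ≤ (ε/2)*(t-s)^α := by
    calc 2*c*(((k:ℝ)^(β-1))⁻¹) * (t-s)^β
        ≤ 2*c*(((k:ℝ)^(β-1))⁻¹) * (T^(β-α)*(t-s)^α) := by
          gcongr
      _ = (2*c*T^(β-α)*(((k:ℝ)^(β-1))⁻¹)) * (t-s)^α := by ring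
      _ ≤ (ε/2)*(t-s)^α :=
          mul_le_mul_of_nonneg_right hkε.le (Real.rpow_nonneg hts _)
  calc (k:ℝ) * (2*c*h^β + (ε/(2*K))*h^α)
      = (k:ℝ) * (2*c*h^β) + (k:ℝ) * ((ε/(2*K))*h^α) := by ring
    _ = 2*c*(((k:ℝ)^(β-1))⁻¹) * (t-s)^β + (ε/2)*(t-s)^α := by rw [term1, term2]
    _ ≤ (ε/2)*(t-s)^α + (ε/2)*(t-s)^α := add_le_add_left hfin _
    _ = ε*(t-s)^α := by ring
end

section
/- Let E be a Banach space, η ∈ (0,1), and A : Δ₂ → E a germ satisfying the hypotheses of the Volterra sewing lemma (‖A_{s,t}‖ ≤ K|t-s|^γ, ‖δA_{s,u,t}‖ ≤ K|t-s|^{γ+αρ}, γ > η, γ+αρ > 1). Assume additionally that for each t the limit (∂_t A)_t := lim_{ε→0} ε^{-1} A_{t,t+ε} exists in E and t ↦ (∂_t A)_t is continuous. Then the Volterra sewing coincides with the Bochner integral: ∫_0^t (t-r)^{-η} A_{dr} = ∫_0^t (t-r)^{-η} (∂_t A)_r dr. -/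
open Filter

set_option maxHeartbeats 4000000 in
/-- Identification of the Volterra sewing with a Bochner integral for differentiable germs:
if `(∂ₜA)_t = lim_{ε→0⁺} ε⁻¹ A_{t,t+ε}` exists and is continuous, then the Volterra sewing
(the limit `V` of the Riemann sums `Σ (t-u)^{-η} A_{u,v}`) satisfies
`∫_0^t (t-r)^{-η} A_{dr} = ∫_0^t (t-r)^{-η} (∂ₜA)_r dr`. -/
theorem stmt_19 (E : Type*) [NormedAddCommGroup E] [NormedSpace ℝ E] [CompleteSpace E]
    (T η γ α ρ K : ℝ) (hT : 0 < T) (hη : η ∈ Set.Ioo (0:ℝ) 1) (hγ : η < γ)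
    (hα : α ∈ Set.Ioo (0:ℝ) 1) (hρ : ρ ∈ Set.Ioo (0:ℝ) 1) (hsum : 1 < γ + α * ρ)
    (hK : 0 ≤ K) (A : ℝ → ℝ → E)
    (hA : ∀ s t, 0 ≤ s → s ≤ t → t ≤ T → ‖A s t‖ ≤ K * (t - s) ^ γ)
    (hδA : ∀ s u t, 0 ≤ s → s ≤ u → u ≤ t → t ≤ T →
      ‖A s t - A s u - A u t‖ ≤ K * (t - s) ^ (γ + α * ρ))
    (dA : ℝ → E)
    (hdA : ∀ t ∈ Set.Ico (0:ℝ) T, Tendsto (fun ε : ℝ => ε⁻¹ • A t (t + ε))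
      (nhdsWithin 0 (Set.Ioi 0)) (nhds (dA t)))
    (hcont : ContinuousOn dA (Set.Icc 0 T))
    (V : ℝ → ℝ → E)
    (hV : ∀ s t, 0 ≤ s → s ≤ t → t ≤ T → ∀ ε > (0:ℝ), ∃ δ > (0:ℝ),
      ∀ (n : ℕ) (π : ℕ → ℝ), π 0 = s → π n = t →
        (∀ i < n, π i ≤ π (i + 1)) → (∀ i < n, π (i + 1) - π i < δ) →
        ‖(∑ i ∈ Finset.range n, (t - π i) ^ (-η) • A (π i) (π (i + 1))) - V s t‖ < ε) :
    ∀ t ∈ Set.Icc (0:ℝ) T, V 0 t = ∫ r in (0:ℝ)..t, (t - r) ^ (-η) • dA r := by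
  obtain ⟨hη0, hη1⟩ := hη
  have hγ0 : 0 < γ := hη0.trans hγ
  set θ : ℝ := γ + α * ρ with hθdef
  have hθ1 : (1:ℝ) < θ := hsum
  have hθ0 : (0:ℝ) < θ := lt_trans one_pos hθ1
  -- bound on dA
  obtain ⟨M, hM⟩ : ∃ M, ∀ x ∈ Set.Icc (0:ℝ) T, ‖dA x‖ ≤ M :=
    isCompact_Icc.exists_bound_of_continuousOn hcont
  have hM0 : 0 ≤ M := le_trans (norm_nonneg _) (hM 0 ⟨le_refl _, hT.le⟩)
  -- A vanishes on the diagonal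
  have hAxx : ∀ x : ℝ, 0 ≤ x → x ≤ T → A x x = 0 := by
    intro x hx0 hxT
    have h := hA x x hx0 le_rfl hxT
    rw [sub_self, Real.zero_rpow (ne_of_gt hγ0), mul_zero] at h
    exact norm_le_zero_iff.mp h
  -- integrability of dA on subintervals
  have hIdA : ∀ a b : ℝ, 0 ≤ a → a ≤ b → b ≤ T →
      IntervalIntegrable dA MeasureTheory.volume a b := by
    intro a b ha hab hb
    exact (hcont.mono (by rw [Set.uIcc_of_le hab]; exact Set.Icc_subset_Icc ha hb)).intervalIntegrable
  -- the defect germ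
  set F : ℝ → ℝ → E := fun x y => A x y - ∫ r in x..y, dA r with hFdef
  have hFxx : ∀ x : ℝ, 0 ≤ x → x ≤ T → F x x = 0 := by
    intro x h0 hT'
    simp [hFdef, hAxx x h0 hT']
  have hFb : ∀ x y : ℝ, 0 ≤ x → x ≤ y → y ≤ T → ‖F x y‖ ≤ K * (y - x) ^ γ + M * (y - x) := by
    intro x y h0 hxy hyT
    refine le_trans (norm_sub_le _ _) (add_le_add (hA x y h0 hxy hyT) ?_)
    have hb : ∀ r ∈ Set.uIoc x y, ‖dA r‖ ≤ M := by
      intro r hr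
      rw [Set.uIoc_of_le hxy] at hr
      exact hM r ⟨le_trans h0 hr.1.le, le_trans hr.2 hyT⟩
    have := intervalIntegral.norm_integral_le_of_norm_le_const hb
    rwa [abs_of_nonneg (by linarith)] at this
  -- chain monotonicity of partitions
  have hchain : ∀ (n : ℕ) (π : ℕ → ℝ), (∀ i < n, π i ≤ π (i+1)) →
      ∀ i j, i ≤ j → j ≤ n → π i ≤ π j := by
    intro n π hst i j hij hjn
    induction j, hij using Nat.le_induction with
    | base => exact le_rfl
    | succ j hij ih => exact le_trans (ih (by omega)) (hst j (by omega))
  -- the zeta-type constant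
  have hsummable : Summable (fun k : ℕ => ((k:ℝ)+1) ^ (-θ)) := by
    have h1 : Summable (fun n : ℕ => 1 / (n:ℝ) ^ θ) := Real.summable_one_div_nat_rpow.mpr hθ1
    refine ((summable_nat_add_iff 1).mpr h1).congr fun k => ?_
    push_cast
    rw [Real.rpow_neg (by positivity), one_div]
  set Z : ℝ := ∑' k : ℕ, ((k:ℝ)+1) ^ (-θ) with hZdef
  have hZ0 : 0 ≤ Z := tsum_nonneg fun k => by positivity
  -- Lemma P : Young's point-removal estimate
  have hP : ∀ (n : ℕ) (π : ℕ → ℝ), 0 ≤ π 0 → π n ≤ T → (∀ i < n, π i ≤ π (i+1)) →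
      ‖(∑ i ∈ Finset.range n, A (π i) (π (i+1))) - A (π 0) (π n)‖
        ≤ K * ∑ k ∈ Finset.range (n-1), (2*(π n - π 0)/((k:ℝ)+1)) ^ θ := by
    intro n
    induction n with
    | zero =>
      intro π h0 hTn hst
      simp [hAxx (π 0) h0 hTn]
    | succ m ih =>
      intro π h0 hTn hst
      rcases Nat.eq_zero_or_pos m with rfl | hm
      · simp
      obtain ⟨m', rfl⟩ : ∃ m', m = m' + 1 := ⟨m - 1, by omega⟩
      -- choose a point to remove
      have hcast : (0:ℝ) < ((m':ℝ)+1) := by positivity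
      have key : ∃ j' ∈ Finset.range (m'+1),
          π (j'+2) - π j' ≤ 2*(π (m'+2) - π 0)/((m':ℝ)+1) := by
        apply Finset.exists_le_of_sum_le (by simp)
        have t1 : ∑ j' ∈ Finset.range (m'+1), (π (j'+2) - π (j'+1)) = π (m'+2) - π 1 := by
          simpa using Finset.sum_range_sub (fun i => π (i+1)) (m'+1)
        have t2 : ∑ j' ∈ Finset.range (m'+1), (π (j'+1) - π j') = π (m'+1) - π 0 :=
          Finset.sum_range_sub π (m'+1)
        have e1 : ∑ j' ∈ Finset.range (m'+1), (π (j'+2) - π j')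
            = (π (m'+2) - π 1) + (π (m'+1) - π 0) := by
          rw [← t1, ← t2, ← Finset.sum_add_distrib]
          exact Finset.sum_congr rfl fun j' _ => by ring
        have e2 : ∑ _j' ∈ Finset.range (m'+1), 2*(π (m'+2) - π 0)/((m':ℝ)+1)
            = 2*(π (m'+2) - π 0) := by
          rw [Finset.sum_const, Finset.card_range, nsmul_eq_mul]
          push_cast
          field_simp
        rw [e1, e2]
        have b1 : π 0 ≤ π 1 := hst 0 (by omega)
        have b2 : π (m'+1) ≤ π (m'+2) := hst (m'+1) (by omega)
        linarith
      obtain ⟨j', hj'mem, hj'le⟩ := key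
      have hj' : j' < m'+1 := Finset.mem_range.mp hj'mem
      set π' : ℕ → ℝ := fun i => if i < j'+1 then π i else π (i+1) with hπ'def
      have hπ'0 : π' 0 = π 0 := by simp [hπ'def]
      have hπ'top : π' (m'+1) = π (m'+2) := by
        simp only [hπ'def]
        rw [if_neg (by omega)]
      have hst' : ∀ i < m'+1, π' i ≤ π' (i+1) := by
        intro i hi
        by_cases h1 : i+1 < j'+1
        · simp only [hπ'def]
          rw [if_pos (by omega), if_pos h1]
          exact hst i (by omega)
        · by_cases h2 : i < j'+1
          · have hij : i = j' := by omega
            subst hij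
            simp only [hπ'def]
            rw [if_pos h2, if_neg (by omega)]
            exact le_trans (hst i (by omega)) (hst (i+1) (by omega))
          · simp only [hπ'def]
            rw [if_neg h2, if_neg (by omega)]
            exact hst (i+1) (by omega)
      -- sum decomposition
      have hsum' : ∑ i ∈ Finset.range (m'+1), A (π' i) (π' (i+1))
          = (∑ i ∈ Finset.range j', A (π i) (π (i+1))) + A (π j') (π (j'+2))
            + ∑ i ∈ Finset.Ico (j'+1) (m'+1), A (π (i+1)) (π (i+2)) := by
        rw [Finset.range_eq_Ico, ← Finset.sum_Ico_consecutive _ (Nat.zero_le (j'+1)) (by omega : j'+1 ≤ m'+1)]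
        congr 1
        · rw [← Finset.range_eq_Ico, Finset.sum_range_succ]
          congr 1
          · exact Finset.sum_congr rfl fun i hi => by
              have hi' := Finset.mem_range.mp hi
              simp only [hπ'def]
              rw [if_pos (by omega), if_pos (by omega)]
          · simp only [hπ'def]
            rw [if_pos (by omega), if_neg (by omega)]
        · exact Finset.sum_congr rfl fun i hi => by
            have hi' := (Finset.mem_Ico.mp hi).1
            simp only [hπ'def]
            rw [if_neg (by omega), if_neg (by omega)]
      have hsum2 : ∑ i ∈ Finset.range (m'+2), A (π i) (π (i+1))
          = (∑ i ∈ Finset.range j', A (π i) (π (i+1)))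
            + (A (π j') (π (j'+1)) + A (π (j'+1)) (π (j'+2)))
            + ∑ i ∈ Finset.Ico (j'+1) (m'+1), A (π (i+1)) (π (i+2)) := by
        have hre : ∑ i ∈ Finset.Ico (j'+1) (m'+1), A (π (i+1)) (π (i+2))
            = ∑ i ∈ Finset.Ico (j'+2) (m'+2), A (π i) (π (i+1)) := by
          rw [Finset.sum_Ico_eq_sum_range, Finset.sum_Ico_eq_sum_range]
          refine Finset.sum_congr (by congr 1; omega) fun i _ => ?_
          have e1 : j' + 1 + i + 1 = j' + 2 + i := by omega
          have e2 : j' + 1 + i + 2 = j' + 2 + i + 1 := by omega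
          rw [e1, e2]
        rw [hre, Finset.range_eq_Ico,
          ← Finset.sum_Ico_consecutive _ (Nat.zero_le (j'+2)) (by omega : j'+2 ≤ m'+2),
          ← Finset.range_eq_Ico]
        congr 1
        rw [Finset.sum_range_succ, Finset.sum_range_succ, show j'+1+1 = j'+2 from rfl]
        abel
      -- the removed-point error
      have hπj'0 : 0 ≤ π j' := le_trans h0 (hchain (m'+2) π hst 0 j' (by omega) (by omega))
      have hπj'T : π (j'+2) ≤ T :=
        le_trans (hchain (m'+2) π hst (j'+2) (m'+2) (by omega) (by omega)) hTn
      have hδterm : ‖A (π j') (π (j'+2)) - A (π j') (π (j'+1)) - A (π (j'+1)) (π (j'+2))‖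
          ≤ K * (2*(π (m'+2) - π 0)/((m':ℝ)+1)) ^ θ := by
        refine le_trans (hδA (π j') (π (j'+1)) (π (j'+2)) hπj'0 (hst j' (by omega))
          (hst (j'+1) (by omega)) hπj'T) ?_
        refine mul_le_mul_of_nonneg_left ?_ hK
        refine Real.rpow_le_rpow ?_ hj'le hθ0.le
        have := hst j' (by omega : j' < m'+2)
        have := hst (j'+1) (by omega : j'+1 < m'+2)
        linarith
      -- apply the induction hypothesis
      have hIH := ih π' (hπ'0 ▸ h0) (hπ'top ▸ hTn) hst'
      rw [hπ'0, hπ'top] at hIH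
      -- combine
      have hdecomp : (∑ i ∈ Finset.range (m'+2), A (π i) (π (i+1))) - A (π 0) (π (m'+2))
          = ((∑ i ∈ Finset.range (m'+1), A (π' i) (π' (i+1))) - A (π 0) (π (m'+2)))
            + (A (π j') (π (j'+1)) + A (π (j'+1)) (π (j'+2)) - A (π j') (π (j'+2))) := by
        rw [hsum2, hsum']
        abel
      rw [hdecomp]
      refine le_trans (norm_add_le _ _) ?_
      have hnorm2 : ‖A (π j') (π (j'+1)) + A (π (j'+1)) (π (j'+2)) - A (π j') (π (j'+2))‖
          = ‖A (π j') (π (j'+2)) - A (π j') (π (j'+1)) - A (π (j'+1)) (π (j'+2))‖ := by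
        rw [← norm_neg]
        congr 1
        abel
      rw [hnorm2]
      have hsplit : K * ∑ k ∈ Finset.range ((m'+2)-1), (2*(π (m'+2) - π 0)/((k:ℝ)+1)) ^ θ
          = K * ∑ k ∈ Finset.range ((m'+1)-1), (2*(π (m'+2) - π 0)/((k:ℝ)+1)) ^ θ
            + K * (2*(π (m'+2) - π 0)/((m':ℝ)+1)) ^ θ := by
        have : (m'+2)-1 = ((m'+1)-1) + 1 := by omega
        rw [this, Finset.sum_range_succ, mul_add]
        norm_num
      rw [hsplit]
      exact add_le_add hIH hδterm
  -- pointwise smallness of F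
  have hFpt : ∀ c : ℝ, 0 ≤ c → c < T → ∀ ε > (0:ℝ), ∃ δ > (0:ℝ), ∀ h : ℝ, 0 < h → h < δ →
      c + h ≤ T → ‖F c (c + h)‖ ≤ ε * h := by
    intro c hc0 hcT ε hε
    have h1 := hdA c ⟨hc0, hcT⟩
    rw [Metric.tendsto_nhdsWithin_nhds] at h1
    obtain ⟨δ₁, hδ₁, hprop₁⟩ := h1 (ε/3) (by positivity)
    have h2 : ContinuousWithinAt dA (Set.Icc 0 T) c := hcont c ⟨hc0, hcT.le⟩
    rw [Metric.continuousWithinAt_iff] at h2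
    obtain ⟨δ₂, hδ₂, hprop₂⟩ := h2 (ε/3) (by positivity)
    refine ⟨min δ₁ δ₂, lt_min hδ₁ hδ₂, ?_⟩
    intro h hh0 hhδ hchT
    have hhδ₁ : h < δ₁ := lt_of_lt_of_le hhδ (min_le_left _ _)
    have hhδ₂ : h < δ₂ := lt_of_lt_of_le hhδ (min_le_right _ _)
    -- first piece
    have hA1 : ‖A c (c + h) - h • dA c‖ ≤ (ε/3) * h := by
      have := hprop₁ (Set.mem_Ioi.mpr hh0) (by rwa [Real.dist_eq, sub_zero, abs_of_pos hh0])
      rw [dist_eq_norm] at this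
      have heq : A c (c + h) - h • dA c = h • (h⁻¹ • A c (c + h) - dA c) := by
        rw [smul_sub, smul_inv_smul₀ (ne_of_gt hh0)]
      rw [heq, norm_smul, Real.norm_eq_abs, abs_of_pos hh0, mul_comm]
      exact mul_le_mul_of_nonneg_right this.le hh0.le
    -- second piece
    have hInt : IntervalIntegrable dA MeasureTheory.volume c (c + h) :=
      hIdA c (c + h) hc0 (by linarith) hchT
    have hA2 : ‖(∫ r in c..(c+h), dA r) - h • dA c‖ ≤ (ε/3) * h := by
      have hconst : (∫ _r in c..(c+h), dA c) = h • dA c := by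
        rw [intervalIntegral.integral_const]
        congr 1
        ring
      rw [← hconst, ← intervalIntegral.integral_sub hInt intervalIntegrable_const]
      have hbd : ∀ r ∈ Set.uIoc c (c + h), ‖dA r - dA c‖ ≤ ε/3 := by
        intro r hr
        rw [Set.uIoc_of_le (by linarith)] at hr
        rw [← dist_eq_norm]
        refine (hprop₂ ⟨le_trans hc0 hr.1.le, le_trans hr.2 hchT⟩ ?_).le
        rw [Real.dist_eq, abs_of_nonneg (by linarith [hr.1.le])]
        linarith [hr.2]
      have := intervalIntegral.norm_integral_le_of_norm_le_const hbd
      rwa [show c + h - c = h by ring, abs_of_pos hh0] at this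
    calc ‖F c (c + h)‖ = ‖(A c (c + h) - h • dA c) - ((∫ r in c..(c+h), dA r) - h • dA c)‖ := by
          simp only [hFdef]; congr 1; abel
      _ ≤ ‖A c (c + h) - h • dA c‖ + ‖(∫ r in c..(c+h), dA r) - h • dA c‖ := norm_sub_le _ _
      _ ≤ (ε/3) * h + (ε/3) * h := add_le_add hA1 hA2
      _ ≤ ε * h := by nlinarith
  -- Lemma Q : gauge-climbing partitions with small total defect
  have hρφ : ∀ e : ℝ, 0 < e → ∃ r > (0:ℝ), K * r ^ γ + M * r ≤ e := by
    intro e he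
    have htend : Tendsto (fun r : ℝ => K * r ^ γ + M * r) (nhds 0) (nhds 0) := by
      have h1 : Tendsto (fun r : ℝ => r ^ γ) (nhds 0) (nhds ((0:ℝ) ^ γ)) :=
        (Real.continuousAt_rpow_const 0 γ (Or.inr hγ0.le)).tendsto
      rw [Real.zero_rpow (ne_of_gt hγ0)] at h1
      have h2 : Tendsto (fun r : ℝ => r) (nhds (0:ℝ)) (nhds (0:ℝ)) := tendsto_id
      have := (h1.const_mul K).add (h2.const_mul M)
      simpa using this
    have hev : ∀ᶠ r in nhdsWithin (0:ℝ) (Set.Ioi 0), K * r ^ γ + M * r < e :=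
      ((htend.mono_left nhdsWithin_le_nhds).eventually_lt_const he)
    obtain ⟨r, hr1, hr2⟩ := (hev.and eventually_mem_nhdsWithin).exists
    exact ⟨r, hr2, hr1.le⟩
  have hQ : ∀ s u : ℝ, 0 ≤ s → s ≤ u → u ≤ T → ∀ ε > (0:ℝ), ∃ n, ∃ π : ℕ → ℝ,
      π 0 = s ∧ π n = u ∧ (∀ i < n, π i ≤ π (i+1)) ∧
      ∑ i ∈ Finset.range n, ‖F (π i) (π (i+1))‖ ≤ ε := by
    intro s u hs0 hsu huT ε hε
    have hus0 : 0 ≤ u - s := by linarith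
    set ε₁ : ℝ := ε / (2*(u - s) + 2) with hε₁def
    have hε₁ : 0 < ε₁ := by positivity
    set S : Set ℝ := {w | w ∈ Set.Icc s u ∧ ∃ n, ∃ π : ℕ → ℝ, π 0 = s ∧ π n = w ∧
      (∀ i < n, π i ≤ π (i+1)) ∧
      ∑ i ∈ Finset.range n, ‖F (π i) (π (i+1))‖ ≤ ε₁ * (w - s)} with hSdef
    have hsS : s ∈ S := by
      refine ⟨⟨le_rfl, hsu⟩, 0, fun _ => s, rfl, rfl, fun i hi => absurd hi (Nat.not_lt_zero i), ?_⟩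
      simp
    have hSne : S.Nonempty := ⟨s, hsS⟩
    have hSbdd : BddAbove S := ⟨u, fun w hw => hw.1.2⟩
    set c := sSup S with hcdef
    have hcs : s ≤ c := le_csSup hSbdd hsS
    have hcu : c ≤ u := csSup_le hSne (fun w hw => hw.1.2)
    have hc0 : 0 ≤ c := le_trans hs0 hcs
    -- approaching the supremum
    have claim1 : ∀ r > (0:ℝ), ∃ n, ∃ π : ℕ → ℝ, π 0 = s ∧ π n = c ∧
        (∀ i < n, π i ≤ π (i+1)) ∧
        ∑ i ∈ Finset.range n, ‖F (π i) (π (i+1))‖ ≤ ε₁ * (c - s) + (K * r ^ γ + M * r) := by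
      intro r hr
      obtain ⟨w, hwS, hw⟩ := exists_lt_of_lt_csSup hSne (by linarith : c - r < c)
      have hwc : w ≤ c := le_csSup hSbdd hwS
      obtain ⟨⟨hws, hwu⟩, n, π, hπ0, hπn, hst, hsum'⟩ := hwS
      refine ⟨n+1, fun i => if i ≤ n then π i else c, by simp [hπ0], by
          show (if n+1 ≤ n then π (n+1) else c) = c
          rw [if_neg (by omega)], ?_, ?_⟩
      · intro i hi
        show (if i ≤ n then π i else c) ≤ (if i+1 ≤ n then π (i+1) else c)
        by_cases h1 : i + 1 ≤ n
        · rw [if_pos (by omega), if_pos h1]; exact hst i (by omega)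
        · have hin : i = n := by omega
          subst hin
          rw [if_pos le_rfl, if_neg h1, hπn]
          exact hwc
      · rw [Finset.sum_range_succ]
        have hterms : ∑ i ∈ Finset.range n, ‖F ((fun i => if i ≤ n then π i else c) i)
            ((fun i => if i ≤ n then π i else c) (i+1))‖
            = ∑ i ∈ Finset.range n, ‖F (π i) (π (i+1))‖ := by
          refine Finset.sum_congr rfl fun i hi => ?_
          have hi' := Finset.mem_range.mp hi
          simp only
          rw [if_pos (by omega), if_pos (by omega)]
        rw [hterms]
        show _ + ‖F (if n ≤ n then π n else c) (if n+1 ≤ n then π (n+1) else c)‖ ≤ _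
        rw [if_pos le_rfl, if_neg (by omega), hπn]
        have hFwc : ‖F w c‖ ≤ K * (c - w) ^ γ + M * (c - w) :=
          hFb w c (le_trans hs0 hws) hwc (le_trans hcu huT)
        have hcw : c - w ≤ r := by linarith
        have h1 : (c - w) ^ γ ≤ r ^ γ := Real.rpow_le_rpow (by linarith) hcw hγ0.le
        have h2 : ε₁ * (w - s) ≤ ε₁ * (c - s) := by nlinarith
        have h3 : K * (c - w) ^ γ ≤ K * r ^ γ := mul_le_mul_of_nonneg_left h1 hK
        have h4 : M * (c - w) ≤ M * r := mul_le_mul_of_nonneg_left hcw hM0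
        linarith
    -- the supremum equals u
    have hcu' : c = u := by
      by_contra hne
      have hclt : c < u := lt_of_le_of_ne hcu hne
      have hcT : c < T := lt_of_lt_of_le hclt huT
      obtain ⟨δc, hδc, hδcprop⟩ := hFpt c hc0 hcT (ε₁/2) (by positivity)
      set h : ℝ := min (δc/2) (u - c) with hhdef
      have hh0 : 0 < h := lt_min (by positivity) (by linarith)
      have hhδ : h < δc := lt_of_le_of_lt (min_le_left _ _) (by linarith)
      have hhu : c + h ≤ u := by
        have := min_le_right (δc/2) (u - c); simp only [hhdef]; linarith
      have hchT : c + h ≤ T := le_trans hhu huT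
      have hFch : ‖F c (c+h)‖ ≤ (ε₁/2) * h := hδcprop h hh0 hhδ hchT
      obtain ⟨r, hr0, hrle⟩ := hρφ ((ε₁/2) * h) (by positivity)
      obtain ⟨n, π, hπ0, hπn, hst, hsum'⟩ := claim1 r hr0
      have hmem : c + h ∈ S := by
        refine ⟨⟨by linarith, hhu⟩, n+1, fun i => if i ≤ n then π i else c + h,
          by simp [hπ0], by
            show (if n+1 ≤ n then π (n+1) else c + h) = c + h
            rw [if_neg (by omega)], ?_, ?_⟩
        · intro i hi
          show (if i ≤ n then π i else c + h) ≤ (if i+1 ≤ n then π (i+1) else c + h)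
          by_cases h1 : i + 1 ≤ n
          · rw [if_pos (by omega), if_pos h1]; exact hst i (by omega)
          · have hin : i = n := by omega
            subst hin
            rw [if_pos le_rfl, if_neg h1, hπn]
            linarith
        · rw [Finset.sum_range_succ]
          have hterms : ∑ i ∈ Finset.range n, ‖F ((fun i => if i ≤ n then π i else c + h) i)
              ((fun i => if i ≤ n then π i else c + h) (i+1))‖
              = ∑ i ∈ Finset.range n, ‖F (π i) (π (i+1))‖ := by
            refine Finset.sum_congr rfl fun i hi => ?_
            have hi' := Finset.mem_range.mp hi
            simp only
            rw [if_pos (by omega), if_pos (by omega)]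
          rw [hterms]
          show _ + ‖F (if n ≤ n then π n else c + h) (if n+1 ≤ n then π (n+1) else c + h)‖ ≤ _
          rw [if_pos le_rfl, if_neg (by omega), hπn]
          have : ε₁ * (c + h - s) = ε₁ * (c - s) + (ε₁/2) * h + (ε₁/2) * h := by ring
          rw [this]
          exact add_le_add (by linarith) hFch
      have := le_csSup hSbdd hmem
      linarith
    -- conclude
    obtain ⟨r, hr0, hrle⟩ := hρφ (ε/2) (by positivity)
    obtain ⟨n, π, hπ0, hπn, hst, hsum'⟩ := claim1 r hr0
    refine ⟨n, π, hπ0, by rw [hπn, hcu'], hst, ?_⟩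
    have hb : ε₁ * (c - s) ≤ ε/2 := by
      rw [hε₁def, hcu', div_mul_eq_mul_div, div_le_div_iff₀ (by linarith) two_pos]
      nlinarith
    linarith
  -- Lemma R : quantitative bound on the defect
  have hR : ∀ s u : ℝ, 0 ≤ s → s ≤ u → u ≤ T → ‖F s u‖ ≤ K * 2 ^ θ * Z * (u - s) ^ θ := by
    intro s u hs0 hsu huT
    refine le_of_forall_pos_le_add ?_
    intro ε hε
    obtain ⟨n, π, hπ0, hπn, hst, hsum'⟩ := hQ s u hs0 hsu huT ε hε
    have hb1 := hP n π (hπ0 ▸ hs0) (hπn ▸ huT) hst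
    rw [hπ0, hπn] at hb1
    have hπmem : ∀ i, i ≤ n → 0 ≤ π i ∧ π i ≤ T := by
      intro i hi
      constructor
      · exact le_trans hs0 (hπ0 ▸ hchain n π hst 0 i (Nat.zero_le i) hi)
      · exact le_trans (hπn ▸ hchain n π hst i n hi le_rfl) huT
    have hints : ∀ i < n, IntervalIntegrable dA MeasureTheory.volume (π i) (π (i+1)) :=
      fun i hi => hIdA _ _ (hπmem i (by omega)).1 (hst i hi) (hπmem (i+1) (by omega)).2
    have hintsum : ∑ i ∈ Finset.range n, ∫ r in (π i)..(π (i+1)), dA r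
        = ∫ r in s..u, dA r := by
      rw [intervalIntegral.sum_integral_adjacent_intervals hints, hπ0, hπn]
    have hFsplit : F s u = (A s u - ∑ i ∈ Finset.range n, A (π i) (π (i+1)))
        + ∑ i ∈ Finset.range n, F (π i) (π (i+1)) := by
      simp only [hFdef]
      rw [Finset.sum_sub_distrib, hintsum]
      abel
    rw [hFsplit]
    refine le_trans (norm_add_le _ _) (add_le_add ?_ (le_trans (norm_sum_le _ _) hsum'))
    rw [norm_sub_rev]
    refine le_trans hb1 ?_
    -- K * Σ_{k<n-1} (2(u-s)/(k+1))^θ ≤ K*2^θ*Z*(u-s)^θ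
    have hterm : ∀ k : ℕ, (2*(u-s)/((k:ℝ)+1)) ^ θ
        = (2:ℝ) ^ θ * (u-s) ^ θ * ((k:ℝ)+1) ^ (-θ) := by
      intro k
      rw [Real.div_rpow (by linarith) (by positivity), Real.mul_rpow (by norm_num) (by linarith),
        Real.rpow_neg (by positivity), div_eq_mul_inv]
    have hsum2 : ∑ k ∈ Finset.range (n-1), (2*(u-s)/((k:ℝ)+1)) ^ θ
        ≤ 2 ^ θ * (u-s) ^ θ * Z := by
      calc ∑ k ∈ Finset.range (n-1), (2*(u-s)/((k:ℝ)+1)) ^ θ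
          = 2 ^ θ * (u-s) ^ θ * ∑ k ∈ Finset.range (n-1), ((k:ℝ)+1) ^ (-θ) := by
            rw [Finset.mul_sum]
            exact Finset.sum_congr rfl fun k _ => hterm k
        _ ≤ 2 ^ θ * (u-s) ^ θ * Z := by
            refine mul_le_mul_of_nonneg_left ?_
              (mul_nonneg (Real.rpow_nonneg (by norm_num) θ) (Real.rpow_nonneg (by linarith) θ))
            exact Summable.sum_le_tsum _ (fun k _ => by positivity) hsummable
    calc K * ∑ k ∈ Finset.range (n-1), (2*(u-s)/((k:ℝ)+1)) ^ θ
        ≤ K * (2 ^ θ * (u-s) ^ θ * Z) := mul_le_mul_of_nonneg_left hsum2 hK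
      _ = K * 2 ^ θ * Z * (u - s) ^ θ := by ring
  -- final assembly
  intro t ht
  obtain ⟨ht0, htT⟩ := ht
  rcases eq_or_lt_of_le ht0 with hteq | htpos
  · -- t = 0
    subst hteq
    have hV0 : V 0 0 = 0 := by
      by_contra hne
      obtain ⟨δ, hδ0, hprop⟩ := hV 0 0 le_rfl le_rfl hT.le ‖V 0 0‖ (norm_pos_iff.mpr hne)
      have hres := hprop 0 (fun _ => 0) rfl rfl (fun i hi => absurd hi (Nat.not_lt_zero i))
        (fun i hi => absurd hi (Nat.not_lt_zero i))
      simp only [Finset.range_zero, Finset.sum_empty, zero_sub, norm_neg] at hres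
      exact absurd hres (lt_irrefl _)
    rw [hV0, intervalIntegral.integral_same]
  · -- 0 < t
    set g : ℝ → ℝ := fun r => (t - r) ^ (-η) with hgdef
    set Φ : ℝ → E := fun r => (t - r) ^ (-η) • dA r with hΦdef
    have hIg : ∀ a b : ℝ, IntervalIntegrable g MeasureTheory.volume a b := by
      intro a b
      have hbase := (intervalIntegral.intervalIntegrable_rpow' (a := t - a) (b := t - b)
        (by linarith : (-1:ℝ) < -η)).comp_sub_left t
      simpa [hgdef] using hbase
    have hIΦ : ∀ a b : ℝ, 0 ≤ a → a ≤ b → b ≤ t →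
        IntervalIntegrable Φ MeasureTheory.volume a b := by
      intro a b ha hab hbt
      have huIoc : Set.uIoc a b = Set.Ioc a b := Set.uIoc_of_le hab
      refine IntervalIntegrable.mono_fun ((hIg a b).mul_const M) ?_ ?_
      · have h1 : MeasureTheory.AEStronglyMeasurable g
            (MeasureTheory.volume.restrict (Set.uIoc a b)) :=
          ((measurable_const.sub measurable_id).pow_const (-η)).aestronglyMeasurable
        have h2 : MeasureTheory.AEStronglyMeasurable dA
            (MeasureTheory.volume.restrict (Set.uIoc a b)) := by
          rw [huIoc]
          exact (hcont.mono (Set.Ioc_subset_Icc_self.trans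
            (Set.Icc_subset_Icc ha (le_trans hbt htT)))).aestronglyMeasurable measurableSet_Ioc
        exact h1.smul h2
      · rw [huIoc]
        filter_upwards [MeasureTheory.ae_restrict_mem measurableSet_Ioc] with r hr
        have hr0 : 0 ≤ t - r := by linarith [hr.2]
        have heq : ‖Φ r‖ = (t - r) ^ (-η) * ‖dA r‖ := by
          simp only [hΦdef]
          rw [norm_smul, Real.norm_eq_abs, abs_of_nonneg (Real.rpow_nonneg hr0 _)]
        rw [heq]
        calc (t - r) ^ (-η) * ‖dA r‖ ≤ (t - r) ^ (-η) * M :=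
              mul_le_mul_of_nonneg_left
                (hM r ⟨le_trans ha hr.1.le, le_trans hr.2 (le_trans hbt htT)⟩)
                (Real.rpow_nonneg hr0 _)
          _ ≤ ‖g r * M‖ := le_abs_self _
    have hgint : ∀ a b : ℝ, 0 ≤ a → a ≤ b → b ≤ t →
        (∫ r in a..b, g r) = ((t-a) ^ (1-η) - (t-b) ^ (1-η))/(1-η) := by
      intro a b ha hab hbt
      have hcomp : (∫ r in a..b, g r) = ∫ x in (t-b)..(t-a), x ^ (-η) :=
        intervalIntegral.integral_comp_sub_left (fun x => x ^ (-η)) t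
      rw [hcomp, integral_rpow (Or.inl (by linarith)), show -η + 1 = 1 - η by ring]
    have key : ∀ ε > (0:ℝ), ‖V 0 t - ∫ r in (0:ℝ)..t, Φ r‖ ≤ ε := by
      intro ε hε
      obtain ⟨δ, hδ0, hδprop⟩ := hV 0 t le_rfl htpos.le htT (ε/2) (by positivity)
      set C₁ : ℝ := K * 2 ^ θ * Z with hC₁def
      have hC₁0 : 0 ≤ C₁ := by positivity
      obtain ⟨n, hn1, hmesh, herr⟩ : ∃ n : ℕ, 1 ≤ n ∧ t/(n:ℝ) < δ ∧
          C₁ * (t/(n:ℝ)) ^ (θ-1) * (t ^ (1-η)/(1-η)) + M * ((t/(n:ℝ)) ^ (1-η)/(1-η)) < ε/2 := by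
        have l1 : Tendsto (fun n : ℕ => t/(n:ℝ)) atTop (nhds 0) :=
          tendsto_const_div_atTop_nhds_zero_nat t
        have lp : ∀ p : ℝ, 0 < p → Tendsto (fun n : ℕ => (t/(n:ℝ)) ^ p) atTop (nhds 0) := by
          intro p hp
          have hc := (Real.continuousAt_rpow_const 0 p (Or.inr hp.le)).tendsto
          have hcomp := hc.comp l1
          simpa [Function.comp_def, Real.zero_rpow (ne_of_gt hp)] using hcomp
        have l4 : Tendsto (fun n : ℕ => C₁ * (t/(n:ℝ)) ^ (θ-1) * (t ^ (1-η)/(1-η))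
            + M * ((t/(n:ℝ)) ^ (1-η)/(1-η))) atTop (nhds 0) := by
          have h1 := ((lp (θ-1) (by linarith)).const_mul C₁).mul_const (t ^ (1-η)/(1-η))
          have h2 := ((lp (1-η) (by linarith)).div_const (1-η)).const_mul M
          have h3 := h1.add h2
          simpa using h3
        have e1 := l4.eventually_lt_const (by positivity : (0:ℝ) < ε/2)
        have e2 := l1.eventually_lt_const hδ0
        obtain ⟨n, hn⟩ := (((eventually_ge_atTop 1).and e2).and e1).exists
        exact ⟨n, hn.1.1, hn.1.2, hn.2⟩
      have hn0 : (0:ℝ) < (n:ℝ) := by exact_mod_cast Nat.lt_of_lt_of_le Nat.zero_lt_one hn1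
      have hnne : (n:ℝ) ≠ 0 := ne_of_gt hn0
      set h : ℝ := t/(n:ℝ) with hhdef
      have hh0 : 0 < h := by positivity
      set π : ℕ → ℝ := fun i => (i:ℝ) * h with hπdef
      have hπ0 : π 0 = 0 := by simp [hπdef]
      have hπn : π n = t := by
        simp only [hπdef, hhdef]
        field_simp
      have hstep : ∀ i : ℕ, π (i+1) - π i = h := by
        intro i; simp only [hπdef]; push_cast; ring
      have hmono : ∀ i : ℕ, π i ≤ π (i+1) := fun i => by linarith [hstep i, hh0]
      have hπ0' : ∀ i : ℕ, 0 ≤ π i := by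
        intro i; simp only [hπdef]; positivity
      have hπle : ∀ i : ℕ, i ≤ n → π i ≤ t := by
        intro i hi
        rw [← hπn]
        simp only [hπdef]
        exact mul_le_mul_of_nonneg_right (by exact_mod_cast hi) hh0.le
      have hπlt : ∀ i : ℕ, i < n → π i < t := by
        intro i hi
        rw [← hπn]
        simp only [hπdef]
        exact mul_lt_mul_of_pos_right (by exact_mod_cast hi) hh0
      have hRS := hδprop n π hπ0 hπn (fun i _ => hmono i)
        (fun i _ => by rw [hstep i]; exact hmesh)
      -- splitting the integral
      have hIsplit : ∫ r in (0:ℝ)..t, Φ r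
          = ∑ i ∈ Finset.range n, ∫ r in (π i)..(π (i+1)), Φ r := by
        have hadj := intervalIntegral.sum_integral_adjacent_intervals
          (fun i (hi : i < n) => hIΦ (π i) (π (i+1)) (hπ0' i) (hmono i) (hπle (i+1) hi))
        rw [hπ0, hπn] at hadj
        exact hadj.symm
      have hgsum : ∑ i ∈ Finset.range n, (∫ r in (π i)..(π (i+1)), g r)
          = ∫ r in (0:ℝ)..t, g r := by
        have hadj := intervalIntegral.sum_integral_adjacent_intervals
          (f := g) (μ := MeasureTheory.volume) (a := π) (n := n) (fun i _ => hIg _ _)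
        rw [hπ0, hπn] at hadj
        exact hadj
      have hGdef : (∫ r in (0:ℝ)..t, g r) = t ^ (1-η)/(1-η) := by
        rw [hgint 0 t le_rfl htpos.le le_rfl]
        rw [sub_zero, sub_self, Real.zero_rpow (show (1:ℝ)-η ≠ 0 by linarith), sub_zero]
      have cmp1 : ∀ i < n, (t - π i) ^ (-η) * h ≤ ∫ r in (π i)..(π (i+1)), g r := by
        intro i hi
        have hconst : (t - π i) ^ (-η) * h = ∫ _r in (π i)..(π (i+1)), (t - π i) ^ (-η) := by
          rw [intervalIntegral.integral_const, hstep i, smul_eq_mul, mul_comm]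
        rw [hconst]
        refine intervalIntegral.integral_mono_ae_restrict (hmono i)
          intervalIntegrable_const (hIg _ _) ?_
        have haet : ∀ᵐ r ∂(MeasureTheory.volume.restrict (Set.Icc (π i) (π (i+1)))), r ≠ t := by
          refine MeasureTheory.ae_restrict_of_ae ?_
          rw [MeasureTheory.ae_iff]
          have hset : {r : ℝ | ¬ r ≠ t} = {t} := by ext r; simp
          rw [hset]
          exact MeasureTheory.measure_singleton t
        filter_upwards [MeasureTheory.ae_restrict_mem measurableSet_Icc, haet] with r hr hrt
        have hrto : r < t := lt_of_le_of_ne (le_trans hr.2 (hπle (i+1) hi)) hrt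
        exact Real.rpow_le_rpow_of_nonpos (by linarith) (by linarith [hr.1]) (by linarith)
      have cmp2 : ∀ i : ℕ, i + 1 < n →
          (∫ r in (π i)..(π (i+1)), g r) ≤ (t - π (i+1)) ^ (-η) * h := by
        intro i hi
        have hconst : (t - π (i+1)) ^ (-η) * h
            = ∫ _r in (π i)..(π (i+1)), (t - π (i+1)) ^ (-η) := by
          rw [intervalIntegral.integral_const, hstep i, smul_eq_mul, mul_comm]
        rw [hconst]
        refine intervalIntegral.integral_mono_on (hmono i) (hIg _ _)
          intervalIntegrable_const ?_
        intro r hr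
        have hlt : π (i+1) < t := hπlt (i+1) hi
        exact Real.rpow_le_rpow_of_nonpos (by linarith) (by linarith [hr.2]) (by linarith)
      have hlow : ∑ i ∈ Finset.range n, (t - π i) ^ (-η) * h ≤ t ^ (1-η)/(1-η) := by
        calc ∑ i ∈ Finset.range n, (t - π i) ^ (-η) * h
            ≤ ∑ i ∈ Finset.range n, (∫ r in (π i)..(π (i+1)), g r) :=
              Finset.sum_le_sum fun i hi => cmp1 i (Finset.mem_range.mp hi)
          _ = ∫ r in (0:ℝ)..t, g r := hgsum
          _ = t ^ (1-η)/(1-η) := hGdef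
      have hup : t ^ (1-η)/(1-η) - h ^ (1-η)/(1-η)
          ≤ ∑ i ∈ Finset.range n, (t - π i) ^ (-η) * h := by
        obtain ⟨m, rfl⟩ : ∃ m, n = m + 1 := ⟨n-1, by omega⟩
        rw [Finset.sum_range_succ']
        have hpos0 : 0 ≤ (t - π 0) ^ (-η) * h :=
          mul_nonneg (Real.rpow_nonneg (by rw [hπ0]; linarith) _) hh0.le
        have h2 : ∑ i ∈ Finset.range m, (∫ r in (π i)..(π (i+1)), g r)
            ≤ ∑ i ∈ Finset.range m, (t - π (i+1)) ^ (-η) * h :=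
          Finset.sum_le_sum fun i hi => cmp2 i (by
            have := Finset.mem_range.mp hi; omega)
        have h3 : ∑ i ∈ Finset.range m, (∫ r in (π i)..(π (i+1)), g r)
            = ∫ r in (0:ℝ)..(π m), g r := by
          have hadj := intervalIntegral.sum_integral_adjacent_intervals
            (f := g) (μ := MeasureTheory.volume) (a := π) (n := m) (fun i _ => hIg _ _)
          rw [hπ0] at hadj
          exact hadj
        have htpm : t - π m = h := by
          rw [← hπn]
          simp only [hπdef]
          push_cast
          ring
        have h4 : (∫ r in (0:ℝ)..(π m), g r) = (t ^ (1-η) - h ^ (1-η))/(1-η) := by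
          rw [hgint 0 (π m) le_rfl (hπ0' m) (hπle m (by omega)), sub_zero, htpm]
        have h5 : (t ^ (1-η) - h ^ (1-η))/(1-η) = t ^ (1-η)/(1-η) - h ^ (1-η)/(1-η) := by ring
        linarith
      -- the main per-interval bound
      have hbound : ∀ i ∈ Finset.range n,
          ‖(t - π i) ^ (-η) • F (π i) (π (i+1))
            + ((t - π i) ^ (-η) • (∫ r in (π i)..(π (i+1)), dA r)
              - ∫ r in (π i)..(π (i+1)), Φ r)‖
          ≤ (C₁ * h ^ (θ-1)) * ((t - π i) ^ (-η) * h)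
            + ((∫ r in (π i)..(π (i+1)), g r) - (t - π i) ^ (-η) * h) * M := by
        intro i hmem
        have hi := Finset.mem_range.mp hmem
        have hti0 : 0 ≤ t - π i := by linarith [hπle i (by omega)]
        have hgi0 : 0 ≤ (t - π i) ^ (-η) := Real.rpow_nonneg hti0 _
        refine le_trans (norm_add_le _ _) (add_le_add ?_ ?_)
        · rw [norm_smul, Real.norm_eq_abs, abs_of_nonneg hgi0]
          have hFi : ‖F (π i) (π (i+1))‖ ≤ C₁ * h ^ θ := by
            have hRi := hR (π i) (π (i+1)) (hπ0' i) (hmono i) (le_trans (hπle (i+1) hi) htT)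
            rwa [hstep i] at hRi
          calc (t - π i) ^ (-η) * ‖F (π i) (π (i+1))‖
              ≤ (t - π i) ^ (-η) * (C₁ * h ^ θ) := mul_le_mul_of_nonneg_left hFi hgi0
            _ = (C₁ * h ^ (θ-1)) * ((t - π i) ^ (-η) * h) := by
                rw [show θ = (θ-1) + 1 by ring, Real.rpow_add hh0, Real.rpow_one]
                ring
        · have hsm : (t - π i) ^ (-η) • (∫ r in (π i)..(π (i+1)), dA r)
              = ∫ r in (π i)..(π (i+1)), (t - π i) ^ (-η) • dA r :=
            (intervalIntegral.integral_smul _ _).symm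
          have hIdAi : IntervalIntegrable dA MeasureTheory.volume (π i) (π (i+1)) :=
            hIdA _ _ (hπ0' i) (hmono i) (le_trans (hπle (i+1) hi) htT)
          have hIsmul : IntervalIntegrable (fun r => (t - π i) ^ (-η) • dA r)
              MeasureTheory.volume (π i) (π (i+1)) := hIdAi.smul _
          rw [hsm, ← intervalIntegral.integral_sub hIsmul
            (hIΦ _ _ (hπ0' i) (hmono i) (hπle (i+1) hi))]
          have hbd : ∀ᵐ r ∂(MeasureTheory.volume.restrict (Set.uIoc (π i) (π (i+1)))),
              ‖(t - π i) ^ (-η) • dA r - Φ r‖ ≤ (g r - (t - π i) ^ (-η)) * M := by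
            rw [Set.uIoc_of_le (hmono i)]
            have haet : ∀ᵐ r ∂(MeasureTheory.volume.restrict (Set.Ioc (π i) (π (i+1)))),
                r ≠ t := by
              refine MeasureTheory.ae_restrict_of_ae ?_
              rw [MeasureTheory.ae_iff]
              have hset : {r : ℝ | ¬ r ≠ t} = {t} := by ext r; simp
              rw [hset]
              exact MeasureTheory.measure_singleton t
            filter_upwards [MeasureTheory.ae_restrict_mem measurableSet_Ioc, haet] with r hr hrt
            have hrto : r < t := lt_of_le_of_ne (le_trans hr.2 (hπle (i+1) hi)) hrt
            have hgle : (t - π i) ^ (-η) ≤ g r :=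
              Real.rpow_le_rpow_of_nonpos (by linarith) (by linarith [hr.1.le]) (by linarith)
            have heq : (t - π i) ^ (-η) • dA r - Φ r = ((t - π i) ^ (-η) - g r) • dA r := by
              simp only [hΦdef, hgdef]
              rw [sub_smul]
            rw [heq, norm_smul, Real.norm_eq_abs, abs_of_nonpos (by linarith)]
            have hdAr : ‖dA r‖ ≤ M := hM r ⟨le_trans (hπ0' i) hr.1.le,
              le_trans hr.2 (le_trans (hπle (i+1) hi) htT)⟩
            have : -((t - π i) ^ (-η) - g r) = g r - (t - π i) ^ (-η) := by ring
            rw [this]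
            exact mul_le_mul_of_nonneg_left hdAr (by linarith)
          have hgint2 : IntervalIntegrable (fun r => (g r - (t - π i) ^ (-η)) * M)
              MeasureTheory.volume (π i) (π (i+1)) :=
            ((hIg _ _).sub intervalIntegrable_const).mul_const M
          refine le_trans (intervalIntegral.norm_integral_le_abs_of_norm_le hbd hgint2) ?_
          have hval : (∫ r in (π i)..(π (i+1)), (g r - (t - π i) ^ (-η)) * M)
              = ((∫ r in (π i)..(π (i+1)), g r) - (t - π i) ^ (-η) * h) * M := by
            rw [intervalIntegral.integral_mul_const,
              intervalIntegral.integral_sub (hIg _ _) intervalIntegrable_const,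
              intervalIntegral.integral_const, hstep i, smul_eq_mul, mul_comm ((t - π i) ^ (-η)) h]
          rw [hval, abs_of_nonneg]
          have hc1 := cmp1 i hi
          exact mul_nonneg (by linarith) hM0
      -- sum the bounds
      have hSI : ‖(∑ i ∈ Finset.range n, (t - π i) ^ (-η) • A (π i) (π (i+1)))
          - ∫ r in (0:ℝ)..t, Φ r‖
          ≤ C₁ * h ^ (θ-1) * (t ^ (1-η)/(1-η)) + M * (h ^ (1-η)/(1-η)) := by
        have hAdecomp : ∀ i : ℕ, A (π i) (π (i+1))
            = F (π i) (π (i+1)) + ∫ r in (π i)..(π (i+1)), dA r := by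
          intro i
          simp only [hFdef]
          rw [sub_add_cancel]
        have hdiff : (∑ i ∈ Finset.range n, (t - π i) ^ (-η) • A (π i) (π (i+1)))
            - ∫ r in (0:ℝ)..t, Φ r
            = ∑ i ∈ Finset.range n, ((t - π i) ^ (-η) • F (π i) (π (i+1))
              + ((t - π i) ^ (-η) • (∫ r in (π i)..(π (i+1)), dA r)
                - ∫ r in (π i)..(π (i+1)), Φ r)) := by
          rw [hIsplit, ← Finset.sum_sub_distrib]
          refine Finset.sum_congr rfl fun i _ => ?_
          rw [hAdecomp i, smul_add]
          abel
        rw [hdiff]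
        refine le_trans (norm_sum_le _ _) (le_trans (Finset.sum_le_sum hbound) ?_)
        have e : ∑ i ∈ Finset.range n,
            (((∫ r in (π i)..(π (i+1)), g r) - (t - π i) ^ (-η) * h) * M)
            = ((∫ r in (0:ℝ)..t, g r) - ∑ i ∈ Finset.range n, (t - π i) ^ (-η) * h) * M := by
          rw [← Finset.sum_mul, Finset.sum_sub_distrib, hgsum]
        rw [Finset.sum_add_distrib, ← Finset.mul_sum, e, hGdef]
        have hCh : 0 ≤ C₁ * h ^ (θ-1) := mul_nonneg hC₁0 (Real.rpow_nonneg hh0.le _)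
        have hm1 := mul_le_mul_of_nonneg_left hlow hCh
        have hP2 : t ^ (1-η)/(1-η) - ∑ i ∈ Finset.range n, (t - π i) ^ (-η) * h
            ≤ h ^ (1-η)/(1-η) := by linarith
        have hm2 := mul_le_mul_of_nonneg_right hP2 hM0
        nlinarith
      calc ‖V 0 t - ∫ r in (0:ℝ)..t, Φ r‖
          = ‖((∑ i ∈ Finset.range n, (t - π i) ^ (-η) • A (π i) (π (i+1)))
              - ∫ r in (0:ℝ)..t, Φ r)
            - ((∑ i ∈ Finset.range n, (t - π i) ^ (-η) • A (π i) (π (i+1))) - V 0 t)‖ := by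
            congr 1
            abel
        _ ≤ ‖(∑ i ∈ Finset.range n, (t - π i) ^ (-η) • A (π i) (π (i+1)))
              - ∫ r in (0:ℝ)..t, Φ r‖
            + ‖(∑ i ∈ Finset.range n, (t - π i) ^ (-η) • A (π i) (π (i+1))) - V 0 t‖ :=
            norm_sub_le _ _
        _ ≤ ε/2 + ε/2 := add_le_add (le_trans hSI herr.le) hRS.le
        _ = ε := by ring
    have hle : ‖V 0 t - ∫ r in (0:ℝ)..t, Φ r‖ ≤ 0 :=
      le_of_forall_pos_le_add fun ε hε => by simpa using key ε hε
    have : V 0 t - ∫ r in (0:ℝ)..t, Φ r = 0 :=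
      norm_le_zero_iff.mp hle
    exact sub_eq_zero.mp this
end
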